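/- arXiv:1006.0325 — 4 statements merged into one kernel-verified Lean document; each statement's English description precedes it below -/
import Mathlib

section
/- Let h=(1,h_1,h_2) and h'=(1,h'_1) be pure O-sequences such that h'_1 ≤ h_1. Then the shifted sum (1, h_1+1, h_2+h'_1) is a pure O-sequence. -/
/-- The degree of a monomial, modeled as a finitely supported exponent vector. -/
def monDeg {r : ℕ} (m : Fin r →₀ ℕ) : ℕ := m.sum fun _ e => e

/-- A (monomial) order ideal: a finite nonempty set of monomials closed under divisibility. -/
def IsOrderIdeal {r : ℕ} (X : Finset (Fin r →₀ ℕ)) : Prop :=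
  X.Nonempty ∧ ∀ m ∈ X, ∀ n : Fin r →₀ ℕ, n ≤ m → n ∈ X

/-- An order ideal is pure if all its maximal monomials (w.r.t. divisibility) have
the same degree. -/
def IsPureSet {r : ℕ} (X : Finset (Fin r →₀ ℕ)) : Prop :=
  ∀ m ∈ X, ∀ n ∈ X, (∀ p ∈ X, m ≤ p → p = m) → (∀ p ∈ X, n ≤ p → p = n) →
    monDeg m = monDeg n

/-- The number of monomials of `X` of degree `i`. -/
def degCount {r : ℕ} (X : Finset (Fin r →₀ ℕ)) (i : ℕ) : ℕ :=
  (X.filter fun m => monDeg m = i).card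

/-- `h` is the h-vector `(h_0, …, h_e)` of `X`, where `e` is the top degree of `X`. -/
def IsHVectorOf {r : ℕ} (X : Finset (Fin r →₀ ℕ)) (h : List ℕ) : Prop :=
  h ≠ [] ∧ (∀ i, degCount X i = h.getD i 0) ∧ degCount X (h.length - 1) ≠ 0

/-- A finite sequence is an O-sequence if it is the h-vector of a monomial order ideal. -/
def IsOSequence (h : List ℕ) : Prop :=
  ∃ (r : ℕ) (X : Finset (Fin r →₀ ℕ)), IsOrderIdeal X ∧ IsHVectorOf X h

/-- A finite sequence is a pure O-sequence if it is the h-vector of a pure monomial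
order ideal. -/
def IsPureOSequence (h : List ℕ) : Prop :=
  ∃ (r : ℕ) (X : Finset (Fin r →₀ ℕ)), IsOrderIdeal X ∧ IsPureSet X ∧ IsHVectorOf X h

section Aux

lemma monDeg_eq_sum {r : ℕ} (m : Fin r →₀ ℕ) : monDeg m = ∑ i, m i := by
  rw [monDeg, Finsupp.sum_fintype]; intro; rfl

lemma monDeg_mono {r : ℕ} {m n : Fin r →₀ ℕ} (h : m ≤ n) : monDeg m ≤ monDeg n := by
  rw [monDeg_eq_sum, monDeg_eq_sum]
  exact Finset.sum_le_sum fun i _ => Finsupp.le_def.mp h i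

lemma monDeg_add' {r : ℕ} (m n : Fin r →₀ ℕ) : monDeg (m + n) = monDeg m + monDeg n := by
  simp [monDeg_eq_sum, Finset.sum_add_distrib]

lemma monDeg_zero {r : ℕ} : monDeg (0 : Fin r →₀ ℕ) = 0 := by simp [monDeg]

lemma monDeg_eq_zero {r : ℕ} {m : Fin r →₀ ℕ} (h : monDeg m = 0) : m = 0 := by
  rw [monDeg_eq_sum] at h
  ext i
  exact Finset.sum_eq_zero_iff.mp h i (Finset.mem_univ i)

lemma eq_of_le_of_monDeg_le {r : ℕ} {m n : Fin r →₀ ℕ} (h : m ≤ n)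
    (hd : monDeg n ≤ monDeg m) : m = n := by
  have hsum : ∑ i, m i = ∑ i, n i := by
    rw [← monDeg_eq_sum, ← monDeg_eq_sum]
    exact le_antisymm (monDeg_mono h) hd
  ext i
  exact (Finset.sum_eq_sum_iff_of_le (fun i _ => Finsupp.le_def.mp h i)).mp hsum i
    (Finset.mem_univ i)

noncomputable def emb {r : ℕ} (m : Fin r →₀ ℕ) : Fin (r+1) →₀ ℕ :=
  Finsupp.equivFunOnFinite.symm (Fin.lastCases 0 m)

@[simp] lemma emb_castSucc {r : ℕ} (m : Fin r →₀ ℕ) (j : Fin r) :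
    emb m j.castSucc = m j := by
  simp [emb]

@[simp] lemma emb_last {r : ℕ} (m : Fin r →₀ ℕ) : emb m (Fin.last r) = 0 := by
  simp [emb]

lemma emb_inj {r : ℕ} : Function.Injective (emb (r := r)) := by
  intro a b hab
  ext j
  have := DFunLike.congr_fun hab j.castSucc
  simpa using this

@[simp] lemma monDeg_emb {r : ℕ} (m : Fin r →₀ ℕ) : monDeg (emb m) = monDeg m := by
  rw [monDeg_eq_sum, monDeg_eq_sum, Fin.sum_univ_castSucc]
  simp

@[simp] lemma emb_zero {r : ℕ} : emb (0 : Fin r →₀ ℕ) = 0 := by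
  ext i
  refine Fin.lastCases ?_ ?_ i <;> simp

noncomputable def res {r : ℕ} (n : Fin (r+1) →₀ ℕ) : Fin r →₀ ℕ :=
  Finsupp.equivFunOnFinite.symm (fun j => n j.castSucc)

@[simp] lemma res_apply {r : ℕ} (n : Fin (r+1) →₀ ℕ) (j : Fin r) :
    res n j = n j.castSucc := by simp [res]

lemma emb_res {r : ℕ} {n : Fin (r+1) →₀ ℕ} (h : n (Fin.last r) = 0) :
    emb (res n) = n := by
  ext i
  refine Fin.lastCases ?_ ?_ i <;> simp [h]

lemma emb_res_add {r : ℕ} {n : Fin (r+1) →₀ ℕ} (h : n (Fin.last r) = 1) :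
    emb (res n) + Finsupp.single (Fin.last r) 1 = n := by
  ext i
  refine Fin.lastCases ?_ ?_ i
  · simp [h]
  · intro j
    simp [Finsupp.single_apply_eq_zero, (Fin.castSucc_lt_last j).ne]
end Aux

/-- If `h = (1,h₁,h₂)` and `h' = (1,h₁')` are pure O-sequences with `h₁' ≤ h₁`,
then their shifted sum `(1, h₁+1, h₂+h₁')` is a pure O-sequence. -/
theorem shifted_sum_pure_soc2 (h1 h2 h1' : ℕ)
    (H : IsPureOSequence [1, h1, h2]) (H' : IsPureOSequence [1, h1'])
    (le1 : h1' ≤ h1) :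
    IsPureOSequence [1, h1 + 1, h2 + h1'] := by
  classical
  obtain ⟨r, X, hXoi, hXpure, -, hXcount, hXtop⟩ := H
  obtain ⟨r', X', -, -, -, hXcount', hXtop'⟩ := H'
  have hh1' : h1' ≠ 0 := by
    have := hXtop'
    rw [show ([1, h1'].length - 1) = 1 from rfl, hXcount' 1] at this
    simpa using this
  have hh2 : h2 ≠ 0 := by
    have := hXtop
    rw [show ([1, h1, h2].length - 1) = 2 from rfl, hXcount 2] at this
    simpa using this
  have hX2 : degCount X 2 = h2 := by simpa using hXcount 2
  have hX1 : degCount X 1 = h1 := by simpa using hXcount 1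
  have hX0 : degCount X 0 = 1 := by simpa using hXcount 0
  have hXhi : ∀ k, degCount X (k + 3) = 0 := fun k => by simpa using hXcount (k + 3)
  have hdegle : ∀ m ∈ X, monDeg m ≤ 2 := by
    intro m hm
    by_contra hc
    push_neg at hc
    obtain ⟨k, hk⟩ := Nat.exists_eq_add_of_le hc
    have hne : degCount X (monDeg m) ≠ 0 := by
      have : m ∈ X.filter fun p => monDeg p = monDeg m := Finset.mem_filter.mpr ⟨hm, rfl⟩
      exact Finset.card_ne_zero_of_mem this
    rw [hk, show 2 + 1 + k = k + 3 by omega] at hne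
    exact hne (hXhi k)
  have hmaxdeg : ∀ m ∈ X, (∀ p ∈ X, m ≤ p → p = m) → monDeg m = 2 := by
    intro m hm hmax
    obtain ⟨m2, hm2⟩ : (X.filter fun p => monDeg p = 2).Nonempty := by
      rw [← Finset.card_pos]
      have : degCount X 2 ≠ 0 := by rw [hX2]; exact hh2
      exact Nat.pos_of_ne_zero this
    obtain ⟨hm2X, hm2deg⟩ := Finset.mem_filter.mp hm2
    have hm2max : ∀ p ∈ X, m2 ≤ p → p = m2 := by
      intro p hp hle
      exact (eq_of_le_of_monDeg_le hle (by rw [hm2deg]; exact hdegle p hp)).symm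
    rw [hXpure m hm m2 hm2X hmax hm2max, hm2deg]
  have h0X : (0 : Fin r →₀ ℕ) ∈ X := by
    obtain ⟨m, hm⟩ := hXoi.1
    exact hXoi.2 m hm 0 (Finsupp.le_def.mpr fun i => Nat.zero_le _)
  obtain ⟨S, hSsub, hScard⟩ := Finset.exists_subset_card_eq
    (show h1' ≤ (X.filter fun m => monDeg m = 1).card by
      rw [show (X.filter fun m => monDeg m = 1).card = degCount X 1 from rfl, hX1]; exact le1)
  have hSX : ∀ x ∈ S, x ∈ X := fun x hx => (Finset.mem_filter.mp (hSsub hx)).1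
  have hSdeg : ∀ x ∈ S, monDeg x = 1 := fun x hx => (Finset.mem_filter.mp (hSsub hx)).2
  set z : Fin (r+1) →₀ ℕ := Finsupp.single (Fin.last r) 1 with hz
  set T : Finset (Fin r →₀ ℕ) := insert 0 S with hT
  set Y : Finset (Fin (r+1) →₀ ℕ) := X.image emb ∪ T.image (fun x => emb x + z) with hY
  have hTX : ∀ x ∈ T, x ∈ X := by
    intro x hx
    rcases Finset.mem_insert.mp hx with h | h
    · rw [h]; exact h0X
    · exact hSX x h
  have hTdeg : ∀ x ∈ T, monDeg x ≤ 1 := by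
    intro x hx
    rcases Finset.mem_insert.mp hx with h | h
    · simp [h, monDeg_zero]
    · rw [hSdeg x h]
  have hz_cs : ∀ j : Fin r, z j.castSucc = 0 := fun j => by
    rw [hz]
    exact Finsupp.single_apply_eq_zero.mpr fun h => absurd h (Fin.castSucc_lt_last j).ne
  have hz_last : z (Fin.last r) = 1 := by simp [hz]
  have monDeg_z : monDeg z = 1 := by simp [hz, monDeg, Finsupp.sum_single_index]
  have g_inj : Function.Injective (fun x : Fin r →₀ ℕ => emb x + z) := by
    intro a b hab
    exact emb_inj (by simpa using hab)
  have memY : ∀ y, y ∈ Y ↔ (∃ a ∈ X, emb a = y) ∨ ∃ x ∈ T, emb x + z = y := by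
    intro y; simp [hY, Finset.mem_union, Finset.mem_image]
  have hsplit : ∀ i, degCount Y i
      = degCount X i + (T.filter fun x => monDeg x + 1 = i).card := by
    intro i
    have hdisj : Disjoint ((X.image emb).filter fun m => monDeg m = i)
        ((T.image (fun x => emb x + z)).filter fun m => monDeg m = i) := by
      refine Finset.disjoint_left.mpr ?_
      intro y hy1 hy2
      obtain ⟨a, -, ha⟩ := Finset.mem_image.mp (Finset.mem_of_mem_filter _ hy1)
      obtain ⟨x, -, hx⟩ := Finset.mem_image.mp (Finset.mem_of_mem_filter _ hy2)
      have h01 : (0:ℕ) = 1 := by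
        calc (0:ℕ) = y (Fin.last r) := by rw [← ha]; simp
        _ = 1 := by rw [← hx]; simp [Finsupp.add_apply, hz_last]
      exact absurd h01 (by norm_num)
    unfold degCount
    rw [hY, Finset.filter_union, Finset.card_union_of_disjoint hdisj]
    congr 1
    · rw [Finset.filter_image, Finset.card_image_of_injective _ emb_inj]
      apply congrArg
      apply Finset.filter_congr
      intro m _
      simp [Function.comp, monDeg_emb]
    · rw [Finset.filter_image, Finset.card_image_of_injective _ g_inj]
      apply congrArg
      apply Finset.filter_congr
      intro x _
      simp [Function.comp, monDeg_add', monDeg_z]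
  have hT0 : (T.filter fun x => monDeg x + 1 = 0) = ∅ :=
    Finset.filter_false_of_mem fun x _ => by omega
  have hT1 : (T.filter fun x => monDeg x + 1 = 1) = {0} := by
    ext x
    simp only [Finset.mem_filter, hT, Finset.mem_insert, Finset.mem_singleton,
      add_eq_right]
    constructor
    · rintro ⟨-, hd⟩
      exact monDeg_eq_zero (by omega)
    · rintro rfl
      exact ⟨Or.inl rfl, monDeg_zero⟩
  have hT2 : (T.filter fun x => monDeg x + 1 = 2) = S := by
    ext x
    simp only [Finset.mem_filter, hT, Finset.mem_insert]
    constructor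
    · rintro ⟨h | h, hd⟩
      · exfalso; rw [h, monDeg_zero] at hd; omega
      · exact h
    · intro h
      exact ⟨Or.inr h, by rw [hSdeg x h]⟩
  have hT3 : ∀ k, (T.filter fun x => monDeg x + 1 = k + 3) = ∅ := fun k =>
    Finset.filter_false_of_mem fun x hx => by have := hTdeg x hx; omega
  refine ⟨r + 1, Y, ⟨⟨emb 0, (memY _).mpr (Or.inl ⟨0, h0X, rfl⟩)⟩, ?_⟩, ?_, ?_, ?_, ?_⟩
  · -- order ideal closure
    intro m hm n hn
    rcases (memY m).mp hm with ⟨a, haX, rfl⟩ | ⟨x, hxT, rfl⟩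
    · have hlast : n (Fin.last r) = 0 :=
        Nat.le_zero.mp (by simpa using Finsupp.le_def.mp hn (Fin.last r))
      have hres : res n ≤ a := Finsupp.le_def.mpr fun j => by
        simpa using Finsupp.le_def.mp hn j.castSucc
      exact (memY n).mpr (Or.inl ⟨res n, hXoi.2 a haX _ hres, emb_res hlast⟩)
    · have hlast : n (Fin.last r) ≤ 1 := by
        have := Finsupp.le_def.mp hn (Fin.last r)
        simpa [Finsupp.add_apply, hz_last] using this
      have hres : res n ≤ x := Finsupp.le_def.mpr fun j => by
        have := Finsupp.le_def.mp hn j.castSucc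
        simpa [Finsupp.add_apply, hz_cs j] using this
      rcases Nat.le_one_iff_eq_zero_or_eq_one.mp hlast with hl | hl
      · exact (memY n).mpr (Or.inl ⟨res n, hXoi.2 x (hTX x hxT) _ hres, emb_res hl⟩)
      · have hresT : res n ∈ T := by
          rcases Finset.mem_insert.mp hxT with hx0 | hxS
          · subst hx0
            have h0 : res n = 0 := le_antisymm hres (Finsupp.le_def.mpr fun i => Nat.zero_le _)
            rw [h0]; exact Finset.mem_insert_self _ _
          · have hle1 : monDeg (res n) ≤ 1 := le_of_le_of_eq (monDeg_mono hres) (hSdeg x hxS)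
            rcases Nat.le_one_iff_eq_zero_or_eq_one.mp hle1 with hd | hd
            · rw [monDeg_eq_zero hd]; exact Finset.mem_insert_self _ _
            · have hxx : res n = x := eq_of_le_of_monDeg_le hres (by rw [hd, hSdeg x hxS])
              rw [hxx]; exact Finset.mem_insert_of_mem hxS
        refine (memY n).mpr (Or.inr ⟨res n, hresT, ?_⟩)
        rw [hz]; exact emb_res_add hl
  · -- purity
    have key : ∀ m ∈ Y, (∀ p ∈ Y, m ≤ p → p = m) → monDeg m = 2 := by
      intro m hm hmax
      rcases (memY m).mp hm with ⟨a, haX, rfl⟩ | ⟨x, hxT, rfl⟩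
      · have hamax : ∀ p ∈ X, a ≤ p → p = a := by
          intro p hp hap
          have hle : emb a ≤ emb p := Finsupp.le_def.mpr fun i => by
            refine Fin.lastCases ?_ (fun j => ?_) i
            · simp
            · simpa using Finsupp.le_def.mp hap j
          exact emb_inj (hmax (emb p) ((memY _).mpr (Or.inl ⟨p, hp, rfl⟩)) hle)
        rw [monDeg_emb]; exact hmaxdeg a haX hamax
      · rcases Finset.mem_insert.mp hxT with hx0 | hxS
        · exfalso
          subst hx0
          obtain ⟨s, hs⟩ : S.Nonempty :=
            Finset.card_pos.mp (by rw [hScard]; exact Nat.pos_of_ne_zero hh1')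
          have hle : emb 0 + z ≤ emb s + z := Finsupp.le_def.mpr fun i => by
            simp only [Finsupp.add_apply, emb_zero, Finsupp.coe_zero, Pi.zero_apply, zero_add]
            exact Nat.le_add_left _ _
          have heq := hmax (emb s + z)
            ((memY _).mpr (Or.inr ⟨s, Finset.mem_insert_of_mem hs, rfl⟩)) hle
          have hdeg := congrArg monDeg heq
          rw [monDeg_add', monDeg_add', monDeg_emb, monDeg_emb, hSdeg s hs, monDeg_zero] at hdeg
          omega
        · rw [monDeg_add', monDeg_emb, hSdeg x hxS, monDeg_z]
    intro m hm n hn hmmax hnmax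
    rw [key m hm hmmax, key n hn hnmax]
  · simp
  · -- counts
    intro i
    match i with
    | 0 => rw [hsplit 0, hX0, hT0]; simp
    | 1 => rw [hsplit 1, hX1, hT1]; simp
    | 2 => rw [hsplit 2, hX2, hT2, hScard]; simp
    | (k+3) => rw [hsplit (k+3), hXhi k, hT3 k]; simp
  · -- top
    rw [show ([1, h1 + 1, h2 + h1'].length - 1) = 2 from rfl, hsplit 2, hX2, hT2, hScard]
    omega
end

section
/- Let h=(1, r−1, a, b) and h'=(1, r', c) be differentiable O-sequences such that r'−1 ≤ r−2 and c−r' ≤ a−(r−1). Then the shifted sum (1, r, a+r', b+c) is a differentiable O-sequence. -/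
/-- The first difference `Δh = (h₀, h₁ - h₀, h₂ - h₁, …)` of a sequence. -/
def diffSeq (h : List ℕ) : List ℕ :=
  h.headD 1 :: List.zipWith (fun x y => x - y) h.tail h

/-- A sequence of nonnegative integers is differentiable if its first difference
has all entries nonnegative (i.e. the sequence is nondecreasing) and is an
O-sequence. -/
def IsDifferentiable (h : List ℕ) : Prop :=
  List.Chain' (· ≤ ·) h ∧ IsOSequence (diffSeq h)

namespace ShiftedSum

open Finsupp


/-- Triangular numbers: `T k = k(k+1)/2` = number of degree-2 monomials in `k` variables. -/
def T : ℕ → ℕ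
  | 0 => 0
  | n+1 => T n + (n+1)

/-- `C3 k` = number of degree-3 monomials in `k` variables. -/
def C3 : ℕ → ℕ
  | 0 => 0
  | n+1 => C3 n + T (n+1)

lemma T_zero : T 0 = 0 := rfl
lemma T_succ (n : ℕ) : T (n+1) = T n + (n+1) := rfl
lemma C3_succ (n : ℕ) : C3 (n+1) = C3 n + T (n+1) := rfl

lemma T_add (x y : ℕ) : T (x + y) = T x + x * y + T y := by
  induction y with
  | zero => simp [T]
  | succ n ih => show T (x + n + 1) = _; rw [T_succ, ih, T_succ]; ring

lemma T_mono : Monotone T := by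
  apply monotone_nat_of_le_succ
  intro n; rw [T_succ]; omega

lemma le_T_self (x : ℕ) : x ≤ T x := by
  induction x with
  | zero => simp [T]
  | succ n ih => rw [T_succ]; omega

/-- The index of the triangular block containing `q`. -/
def Kf (q : ℕ) : ℕ := Nat.findGreatest (fun k => T k ≤ q) q

lemma T_Kf_le (q : ℕ) : T (Kf q) ≤ q :=
  Nat.findGreatest_spec (P := fun k => T k ≤ q) (Nat.zero_le q) (by simp [T])

lemma lt_T_Kf_succ (q : ℕ) : q < T (Kf q + 1) := by
  by_cases h : Kf q + 1 ≤ q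
  · by_contra hc
    exact Nat.findGreatest_is_greatest (P := fun k => T k ≤ q)
      (Nat.lt_succ_self _) h (not_lt.mp hc)
  · calc q < Kf q + 1 := by omega
    _ ≤ T (Kf q + 1) := le_T_self _

lemma Kf_eq {k j : ℕ} (hj : j ≤ k) : Kf (T k + j) = k := by
  have h2 : T k + j < T (k + 1) := by rw [T_succ]; omega
  have hle : k ≤ Kf (T k + j) :=
    Nat.le_findGreatest (le_trans (le_T_self k) (by omega)) (by omega)
  have hge : Kf (T k + j) ≤ k := by
    by_contra hc
    have h3 : T (k+1) ≤ T (Kf (T k + j)) := T_mono (by omega)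
    have h4 := T_Kf_le (T k + j)
    omega
  omega

/-- The Macaulay growth bound from degree 2 to degree 3. -/
def f (q : ℕ) : ℕ := C3 (Kf q) + T (q - T (Kf q))

lemma f_rep {k j : ℕ} (hj : j ≤ k) : f (T k + j) = C3 k + T j := by
  unfold f; rw [Kf_eq hj]; congr 2; omega

lemma rep_exists (q : ℕ) : ∃ k j, j ≤ k ∧ q = T k + j := by
  refine ⟨Kf q, q - T (Kf q), ?_, ?_⟩
  · have h1 := T_Kf_le q
    have h2 := lt_T_Kf_succ q
    rw [T_succ] at h2; omega
  · have h1 := T_Kf_le q; omega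

lemma f_zero : f 0 = 0 := by
  rw [show (0:ℕ) = T 0 + 0 by simp [T], f_rep (le_refl 0)]; simp [C3, T]

lemma f_block {k j i : ℕ} (hj : j ≤ k) (hi : j + i ≤ k + 1) :
    f (T k + j + i) = C3 k + T (j + i) := by
  rcases Nat.lt_or_ge (j + i) (k + 1) with h | h
  · rw [show T k + j + i = T k + (j + i) by omega, f_rep (by omega)]
  · have hji : j + i = k + 1 := by omega
    rw [show T k + j + i = T (k+1) + 0 by rw [T_succ]; omega, f_rep (Nat.zero_le _)]
    rw [C3_succ, hji]; simp [T]

lemma f_succ_ge (q : ℕ) : f q + 1 ≤ f (q + 1) := by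
  obtain ⟨k, j, hle, hq⟩ := rep_exists (q + 1)
  rcases Nat.eq_zero_or_pos j with h0 | hpos
  · subst h0
    obtain ⟨k', rfl⟩ : ∃ k', k = k' + 1 := by
      refine ⟨k - 1, ?_⟩
      rcases Nat.eq_zero_or_pos k with h | h
      · exfalso; subst h; simp [T] at hq
      · omega
    have hq' : q = T k' + k' := by rw [T_succ] at hq; omega
    have e1 : f q = C3 k' + T k' := by rw [hq', f_rep (le_refl _)]
    have e2 : f (q+1) = C3 (k'+1) := by
      rw [hq, f_rep (Nat.zero_le _)]; simp [T]
    rw [e1, e2, C3_succ, T_succ]; omega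
  · obtain ⟨j', rfl⟩ : ∃ j', j = j' + 1 := ⟨j - 1, by omega⟩
    have e1 : f q = C3 k + T j' := by rw [show q = T k + j' by omega, f_rep (by omega)]
    have e2 : f (q+1) = C3 k + T (j'+1) := by rw [hq, f_rep (by omega)]
    rw [e1, e2, T_succ]; omega

lemma f_mono : Monotone f :=
  monotone_nat_of_le_succ (fun n => by have := f_succ_ge n; omega)

lemma le_f_self (q : ℕ) : q ≤ f q := by
  induction q with
  | zero => simp [f_zero]
  | succ n ih => have := f_succ_ge n; omega

/-- Majorization inequality for triangular numbers. -/
lemma T_maj {a b d : ℕ} (hba : b ≤ a) : T a + T (b + d) ≤ T (a + d) + T b := by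
  rw [T_add a d, T_add b d]
  have : b * d ≤ a * d := Nat.mul_le_mul_right d hba
  omega

lemma C1' (y : ℕ) : ∀ x, x ≤ T y → f x + x ≤ f (x + y) := by
  induction y with
  | zero => intro x h; simp [T] at h; simp [h, f_zero]
  | succ y ih =>
    intro x hxy
    rcases le_total x (T y) with h | h
    · calc f x + x ≤ f (x + y) := ih x h
        _ ≤ f (x + (y+1)) := f_mono (by omega)
    · obtain ⟨k, j, hjk, hx⟩ := rep_exists x
      have hxlt : x < T (k+1) := by rw [T_succ]; omega
      have hky : k ≤ y + 1 := by
        by_contra hc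
        have h1 : T (y + 2) ≤ T k := T_mono (by omega)
        rw [T_succ] at hxy
        have h2 : T k ≤ x := by omega
        rw [T_succ, T_succ] at h1
        omega
      have hyk : y ≤ k := by
        by_contra hc
        have h2 : T (k+1) ≤ T y := T_mono (by omega)
        omega
      rcases Nat.lt_or_ge k (y+1) with hk | hk
      · have hky' : k = y := by omega
        subst hky'
        have : f (x + (k+1)) = C3 (k+1) + T j := by
          rw [show x + (k+1) = T (k+1) + j by rw [T_succ]; omega, f_rep (by omega)]
        rw [this, hx, f_rep hjk, C3_succ, T_succ]
        have := le_T_self j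
        omega
      · have hky' : k = y + 1 := by omega
        subst hky'
        have hj0 : j = 0 := by omega
        subst hj0
        have : f (x + (y+1)) = C3 (y+1) + T (y+1) := by
          rw [show x + (y+1) = T (y+1) + 0 + (y+1) by omega,
            f_block (Nat.zero_le _) (by omega)]
          simp
        rw [this, hx, f_rep (Nat.zero_le _)]
        have h1 := T_zero
        have h2 := T_succ y
        omega

lemma C1 (x y : ℕ) : f x + min x (T y) ≤ f (x + y) := by
  rcases le_total (T y) x with hyx | hxy
  · rw [min_eq_right hyx]
    obtain ⟨k, j, hjk, hx⟩ := rep_exists x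
    have hxlt : x < T (k+1) := by rw [T_succ]; omega
    have hyk : y ≤ k := by
      by_contra hc
      have : T (k+1) ≤ T y := T_mono (by omega)
      omega
    have hfx : f x = C3 k + T j := by rw [hx, f_rep hjk]
    rcases le_total (j + y) (k + 1) with hcase | hcase
    · have : f (x + y) = C3 k + T (j + y) := by
        rw [hx, f_block hjk hcase]
      rw [this, hfx, T_add]
      omega
    · set u := j + y - (k + 1) with hu
      have hxy2 : x + y = T (k+1) + u := by rw [T_succ]; omega
      have hfxy : f (x + y) = C3 (k+1) + T u := by rw [hxy2, f_rep (by omega)]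
      rw [hfxy, hfx, C3_succ]
      have hd : y = u + (k + 1 - j) := by omega
      have hk1 : k + 1 = j + (k + 1 - j) := by omega
      have hmaj := T_maj (d := k + 1 - j) (a := j) (b := u) (by omega)
      rw [← hd, ← hk1] at hmaj
      omega
  · rw [min_eq_left hxy]
    exact C1' y x hxy

lemma C2' (y : ℕ) : ∀ x, x ≤ T y → f x + x + y + 1 ≤ f (x + y + 1) := by
  induction y with
  | zero =>
    intro x h; simp [T] at h; subst h
    rw [f_zero, show (0:ℕ)+0+1 = T 1 + 0 by simp [T], f_rep (Nat.zero_le _)]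
    simp [C3, T]
  | succ y ih =>
    intro x hxy
    rcases le_total x (T y) with h | h
    · have h1 := ih x h
      have h2 := f_succ_ge (x + y + 1)
      calc f x + x + (y+1) + 1 = (f x + x + y + 1) + 1 := by omega
        _ ≤ f (x + y + 1) + 1 := by omega
        _ ≤ f (x + (y+1) + 1) := by
            rw [show x + (y+1) + 1 = (x + y + 1) + 1 by omega]; exact h2
    · obtain ⟨k, j, hjk, hx⟩ := rep_exists x
      have hxlt : x < T (k+1) := by rw [T_succ]; omega
      have hky : k ≤ y + 1 := by
        by_contra hc
        have h1 : T (y + 2) ≤ T k := T_mono (by omega)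
        rw [T_succ] at hxy
        have h2 : T k ≤ x := by omega
        rw [T_succ, T_succ] at h1
        omega
      have hyk : y ≤ k := by
        by_contra hc
        have h2 : T (k+1) ≤ T y := T_mono (by omega)
        omega
      rcases Nat.lt_or_ge k (y+1) with hk | hk
      · have hky' : k = y := by omega
        subst hky'
        have : f (x + (k+1) + 1) = C3 (k+1) + T (j+1) := by
          rw [show x + (k+1) + 1 = T (k+1) + (j+1) by rw [T_succ]; omega,
            f_rep (by omega)]
        rw [this, hx, f_rep hjk, C3_succ, T_succ, T_succ]
        omega
      · have hky' : k = y + 1 := by omega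
        subst hky'
        have hj0 : j = 0 := by omega
        subst hj0
        have : f (x + (y+1) + 1) = C3 (y+2) := by
          rw [show x + (y+1) + 1 = T (y+2) + 0 by
            rw [show T (y+2) = T (y+1) + (y+2) from T_succ (y+1)]; omega,
            f_rep (Nat.zero_le _)]
          simp [T]
        rw [this, hx, f_rep (Nat.zero_le _)]
        have h1 : C3 (y+2) = C3 (y+1) + T (y+2) := C3_succ (y+1)
        have h2 : T (y+2) = T (y+1) + (y+2) := T_succ (y+1)
        have h3 := T_zero
        omega

lemma C2 (x y : ℕ) : f x + min x (T y) + y + 1 ≤ f (x + y + 1) := by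
  rcases le_total (T y) x with hyx | hxy
  · rw [min_eq_right hyx]
    obtain ⟨k, j, hjk, hx⟩ := rep_exists x
    have hxlt : x < T (k+1) := by rw [T_succ]; omega
    have hyk : y ≤ k := by
      by_contra hc
      have : T (k+1) ≤ T y := T_mono (by omega)
      omega
    have hfx : f x = C3 k + T j := by rw [hx, f_rep hjk]
    rcases le_total (j + (y + 1)) (k + 1) with hcase | hcase
    · have : f (x + y + 1) = C3 k + T (j + (y+1)) := by
        rw [show x + y + 1 = T k + j + (y+1) by omega, f_block hjk hcase]
      rw [this, hfx, T_add, T_succ]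
      omega
    · set u := j + y + 1 - (k + 1) with hu
      have hxy2 : x + y + 1 = T (k+1) + u := by rw [T_succ]; omega
      have hfxy : f (x + y + 1) = C3 (k+1) + T u := by rw [hxy2, f_rep (by omega)]
      rw [hfxy, hfx, C3_succ]
      have hd : y + 1 = u + (k + 1 - j) := by omega
      have hk1 : k + 1 = j + (k + 1 - j) := by omega
      have hTy : T (y + 1) = T y + (y + 1) := T_succ y
      have hmaj := T_maj (d := k + 1 - j) (a := j) (b := u) (by omega)
      rw [← hd, ← hk1] at hmaj
      omega
  · rw [min_eq_left hxy]
    exact C2' y x hxy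

/-- The combined arithmetic inequality used in the induction proving Macaulay's bound. -/
lemma main_arith {q0 p1 q1 p2 e2 e3 : ℕ} (hq1 : q1 ≤ q0) (hq1' : q1 ≤ T p1)
    (hp2 : p2 ≤ p1) (he2 : e2 ≤ 1) (he3 : e3 ≤ e2) (hpe : 1 ≤ p2 → e2 = 1) :
    f q0 + q1 + p2 + e3 ≤ f (q0 + p1 + e2) := by
  have hmin : q1 ≤ min q0 (T p1) := le_min hq1 hq1'
  rcases Nat.eq_zero_or_pos e2 with h | h
  · have hp2' : p2 = 0 := by by_contra hc; have := hpe (by omega); omega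
    have he3' : e3 = 0 := by omega
    subst h; subst hp2'; subst he3'
    have := C1 q0 p1
    simpa using by omega
  · have he2' : e2 = 1 := by omega
    subst he2'
    have := C2 q0 p1
    omega


variable {n : ℕ}

lemma monDeg_eq_sum (m : Fin n →₀ ℕ) : monDeg m = ∑ i, m i :=
  Finsupp.sum_fintype _ _ (fun _ => rfl)

lemma monDeg_zero : monDeg (0 : Fin n →₀ ℕ) = 0 := by simp [monDeg]

lemma monDeg_eq_zero_iff {m : Fin n →₀ ℕ} : monDeg m = 0 ↔ m = 0 := by
  rw [monDeg_eq_sum]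
  constructor
  · intro h
    ext i
    exact (Finset.sum_eq_zero_iff.mp h) i (Finset.mem_univ i)
  · rintro rfl; simp

lemma monDeg_mono {m p : Fin n →₀ ℕ} (h : p ≤ m) : monDeg p ≤ monDeg m := by
  rw [monDeg_eq_sum, monDeg_eq_sum]
  exact Finset.sum_le_sum fun i _ => Finsupp.le_def.mp h i

lemma eq_of_le_of_monDeg_eq {m p : Fin n →₀ ℕ} (h : p ≤ m)
    (hd : monDeg p = monDeg m) : p = m := by
  rw [monDeg_eq_sum, monDeg_eq_sum] at hd
  ext i
  by_contra hne
  have hlt : p i < m i := lt_of_le_of_ne (Finsupp.le_def.mp h i) hne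
  have : ∑ j, p j < ∑ j, m j :=
    Finset.sum_lt_sum (fun j _ => Finsupp.le_def.mp h j) ⟨i, Finset.mem_univ i, hlt⟩
  omega

lemma monDeg_add (m p : Fin n →₀ ℕ) : monDeg (m + p) = monDeg m + monDeg p := by
  rw [monDeg_eq_sum, monDeg_eq_sum, monDeg_eq_sum, ← Finset.sum_add_distrib]
  simp

lemma monDeg_single (i : Fin n) (k : ℕ) : monDeg (single i k) = k := by
  rw [monDeg_eq_sum]
  simp [Finsupp.single_apply]

lemma single_le_mon {m : Fin n →₀ ℕ} {i : Fin n} (h : i ∈ m.support) :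
    single i 1 ≤ m :=
  Finsupp.single_le_iff.mpr (by simpa [Finsupp.mem_support_iff, Nat.one_le_iff_ne_zero] using h)

lemma eq_single_of_monDeg_one {m : Fin n →₀ ℕ} (h : monDeg m = 1) :
    ∃ i, m = single i 1 := by
  have hne : m ≠ 0 := by
    intro h0; rw [h0, monDeg_zero] at h; omega
  obtain ⟨i, hi⟩ := Finsupp.support_nonempty_iff.mpr hne
  refine ⟨i, ?_⟩
  have hle := single_le_mon hi
  exact (eq_of_le_of_monDeg_eq hle (by rw [monDeg_single, h])).symm

lemma exists_divisor {m : Fin n →₀ ℕ} (h : 1 ≤ monDeg m) :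
    ∃ p ≤ m, monDeg p + 1 = monDeg m := by
  have hne : m ≠ 0 := by
    intro h0; rw [h0, monDeg_zero] at h; omega
  obtain ⟨i, hi⟩ := Finsupp.support_nonempty_iff.mpr hne
  set p : Fin n →₀ ℕ := m - single i 1 with hp
  refine ⟨p, tsub_le_self, ?_⟩
  have hmi : 1 ≤ m i := by
    simpa [Finsupp.mem_support_iff, Nat.one_le_iff_ne_zero] using hi
  have happ : ∀ j, p j = m j - (single i 1 : Fin n →₀ ℕ) j := by
    intro j; rw [hp, Finsupp.tsub_apply]
  rw [monDeg_eq_sum, monDeg_eq_sum]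
  rw [← Finset.sum_erase_add _ _ (Finset.mem_univ i),
    ← Finset.sum_erase_add _ (fun j => m j) (Finset.mem_univ i)]
  have heq : ∀ j ∈ Finset.univ.erase i, p j = m j := by
    intro j hj
    have hji : j ≠ i := Finset.ne_of_mem_erase hj
    rw [happ, Finsupp.single_apply, if_neg (Ne.symm hji)]
    omega
  rw [Finset.sum_congr rfl heq]
  have hpi : p i = m i - 1 := by
    rw [happ, Finsupp.single_apply, if_pos rfl]
  have hrfl : (Finset.univ.erase i).sum ⇑m = ∑ x ∈ Finset.univ.erase i, m x := rfl
  omega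

/-- The set of monomials of degree `d` supported on `S`. -/
noncomputable def mons (S : Finset (Fin n)) (d : ℕ) : Finset (Fin n →₀ ℕ) :=
  (S.sym d).image fun s : Sym (Fin n) d => Multiset.toFinsupp (s : Multiset (Fin n))

lemma monDeg_toFinsupp (s : Multiset (Fin n)) :
    monDeg (Multiset.toFinsupp s) = Multiset.card s := by
  have h := Finsupp.card_toMultiset (Multiset.toFinsupp s)
  rw [Multiset.toFinsupp_toMultiset] at h
  rw [h]
  rfl

lemma mem_mons {S : Finset (Fin n)} {d : ℕ} {m : Fin n →₀ ℕ} :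
    m ∈ mons S d ↔ monDeg m = d ∧ m.support ⊆ S := by
  constructor
  · intro h
    obtain ⟨s, hs, rfl⟩ := Finset.mem_image.mp h
    rw [Finset.mem_sym_iff] at hs
    constructor
    · rw [monDeg_toFinsupp]; exact s.2
    · intro i hi
      rw [Multiset.toFinsupp_support, Multiset.mem_toFinset] at hi
      exact hs i (Sym.mem_coe.mp hi)
  · rintro ⟨hd, hsupp⟩
    have hcard : Multiset.card (Finsupp.toMultiset m) = d := by
      rw [Finsupp.card_toMultiset]; exact hd
    refine Finset.mem_image.mpr ⟨Sym.mk (Finsupp.toMultiset m) hcard, ?_, ?_⟩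
    · rw [Finset.mem_sym_iff]
      intro a ha
      rw [Sym.mem_mk, Finsupp.mem_toMultiset] at ha
      exact hsupp ha
    · exact Finsupp.toMultiset_toFinsupp m

lemma card_sym' (S : Finset (Fin n)) (d : ℕ) :
    (S.sym d).card = Nat.multichoose S.card d := by
  classical
  have himg : S.sym d =
      Finset.univ.image (fun s : Sym {x // x ∈ S} d => s.map Subtype.val) := by
    ext m
    simp only [Finset.mem_image, Finset.mem_univ, true_and, Finset.mem_sym_iff]
    constructor
    · intro h
      refine ⟨m.attach.map (fun x => ⟨x.1, h x.1 x.2⟩), ?_⟩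
      rw [Sym.map_map]
      exact m.attach_map_coe
    · rintro ⟨s, rfl⟩ a ha
      rw [Sym.mem_map] at ha
      obtain ⟨b, hb, rfl⟩ := ha
      exact b.2
  rw [himg, Finset.card_image_of_injective _ (Sym.map_injective Subtype.val_injective _),
    Finset.card_univ, Sym.card_sym_eq_multichoose, Fintype.card_coe]

/-- Downward-closed (possibly empty) sets of monomials. -/
def DownClosed (X : Finset (Fin n →₀ ℕ)) : Prop :=
  ∀ m ∈ X, ∀ p : Fin n →₀ ℕ, p ≤ m → p ∈ X

lemma degCount_mono {X Y : Finset (Fin n →₀ ℕ)} (h : X ⊆ Y) (d : ℕ) :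
    degCount X d ≤ degCount Y d :=
  Finset.card_le_card (Finset.filter_subset_filter _ h)

lemma degCount_zero_le_one (X : Finset (Fin n →₀ ℕ)) : degCount X 0 ≤ 1 := by
  have : X.filter (fun m => monDeg m = 0) ⊆ {0} := by
    intro m hm
    rw [Finset.mem_filter] at hm
    rw [Finset.mem_singleton]
    exact monDeg_eq_zero_iff.mp hm.2
  calc degCount X 0 ≤ ({0} : Finset (Fin n →₀ ℕ)).card := Finset.card_le_card this
    _ = 1 := Finset.card_singleton _

lemma degCount_zero_of_mem {X : Finset (Fin n →₀ ℕ)} (h : (0 : Fin n →₀ ℕ) ∈ X) :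
    degCount X 0 = 1 := by
  have h1 : (0 : Fin n →₀ ℕ) ∈ X.filter (fun m => monDeg m = 0) :=
    Finset.mem_filter.mpr ⟨h, monDeg_zero⟩
  have h2 := Finset.card_le_card (Finset.singleton_subset_iff.mpr h1)
  have h3 := degCount_zero_le_one X
  rw [Finset.card_singleton] at h2
  unfold degCount at *
  omega

lemma degCount_pos_step {X : Finset (Fin n →₀ ℕ)} (hX : DownClosed X) {d : ℕ}
    (h : degCount X (d + 1) ≠ 0) : degCount X d ≠ 0 := by
  obtain ⟨m, hm⟩ := Finset.card_ne_zero.mp h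
  rw [Finset.mem_filter] at hm
  obtain ⟨p, hpm, hpd⟩ := exists_divisor (m := m) (by omega)
  have hp : p ∈ X.filter (fun m => monDeg m = d) :=
    Finset.mem_filter.mpr ⟨hX m hm.1 p hpm, by omega⟩
  exact Finset.card_ne_zero.mpr ⟨p, hp⟩

/-- The degree-1 elements of a downward closed set are the variables occurring in it. -/
noncomputable def varsOf (X : Finset (Fin n →₀ ℕ)) : Finset (Fin n) :=
  Finset.univ.filter fun i => Finsupp.single i 1 ∈ X

lemma filter_deg_one {X : Finset (Fin n →₀ ℕ)} :
    X.filter (fun m => monDeg m = 1) = (varsOf X).image (fun i => Finsupp.single i 1) := by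
  ext m
  rw [Finset.mem_filter, Finset.mem_image]
  constructor
  · rintro ⟨hm, hd⟩
    obtain ⟨i, rfl⟩ := eq_single_of_monDeg_one hd
    exact ⟨i, Finset.mem_filter.mpr ⟨Finset.mem_univ i, hm⟩, rfl⟩
  · rintro ⟨i, hi, rfl⟩
    exact ⟨(Finset.mem_filter.mp hi).2, monDeg_single i 1⟩

lemma degCount_one {X : Finset (Fin n →₀ ℕ)} : degCount X 1 = (varsOf X).card := by
  unfold degCount
  rw [filter_deg_one, Finset.card_image_of_injective _ (Finsupp.single_left_injective one_ne_zero)]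

lemma support_subset_varsOf {X : Finset (Fin n →₀ ℕ)} (hX : DownClosed X)
    {m : Fin n →₀ ℕ} (hm : m ∈ X) : m.support ⊆ varsOf X := by
  intro i hi
  exact Finset.mem_filter.mpr ⟨Finset.mem_univ i, hX m hm _ (single_le_mon hi)⟩

lemma T_multichoose (p : ℕ) : Nat.multichoose p 2 = T p := by
  induction p with
  | zero => simp [Nat.multichoose_zero_succ, T]
  | succ p ih =>
    rw [Nat.multichoose_succ_succ, Nat.multichoose_one_right, ih, T_succ]

lemma C3_multichoose (p : ℕ) : Nat.multichoose p 3 = C3 p := by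
  induction p with
  | zero => simp [Nat.multichoose_zero_succ, C3]
  | succ p ih =>
    rw [Nat.multichoose_succ_succ, ih, T_multichoose, C3_succ]

lemma card_mons (S : Finset (Fin n)) (d : ℕ) :
    (mons S d).card = Nat.multichoose S.card d := by
  unfold mons
  rw [Finset.card_image_of_injective, card_sym' S d]
  intro a b hab
  exact Sym.coe_injective (Multiset.toFinsupp.injective hab)

/-- Macaulay necessity in degree 2. -/
lemma necessity_two {X : Finset (Fin n →₀ ℕ)} (hX : DownClosed X) :
    degCount X 2 ≤ T (degCount X 1) := by
  have hsub : X.filter (fun m => monDeg m = 2) ⊆ mons (varsOf X) 2 := by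
    intro m hm
    rw [Finset.mem_filter] at hm
    exact mem_mons.mpr ⟨hm.2, support_subset_varsOf hX hm.1⟩
  calc degCount X 2 ≤ (mons (varsOf X) 2).card := Finset.card_le_card hsub
    _ = Nat.multichoose (varsOf X).card 2 := card_mons _ _
    _ = T (degCount X 1) := by rw [T_multichoose, degCount_one]

section Slice

variable {n : ℕ}

lemma monDeg_cons (y : ℕ) (t : Fin n →₀ ℕ) :
    monDeg (Finsupp.cons y t) = y + monDeg t := by
  rw [monDeg_eq_sum, monDeg_eq_sum, Fin.sum_univ_succ]
  simp [Finsupp.cons_zero, Finsupp.cons_succ]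

lemma monDeg_decomp (m : Fin (n+1) →₀ ℕ) :
    monDeg m = m 0 + monDeg (Finsupp.tail m) := by
  conv_lhs => rw [← Finsupp.cons_tail m]
  rw [monDeg_cons]

lemma cons_le {k : ℕ} {p : Fin n →₀ ℕ} {m : Fin (n+1) →₀ ℕ}
    (hk : k ≤ m 0) (hp : p ≤ Finsupp.tail m) : Finsupp.cons k p ≤ m := by
  rw [Finsupp.le_def]
  intro i
  refine Fin.cases ?_ ?_ i
  · rw [Finsupp.cons_zero]; exact hk
  · intro j
    rw [Finsupp.cons_succ]
    have := Finsupp.le_def.mp hp j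
    rwa [Finsupp.tail_apply] at this

/-- The `k`-th slice of `X`: tails of elements whose exponent of the first variable is `k`. -/
noncomputable def slice (X : Finset (Fin (n+1) →₀ ℕ)) (k : ℕ) : Finset (Fin n →₀ ℕ) :=
  (X.filter fun m => m 0 = k).image Finsupp.tail

lemma mem_slice {X : Finset (Fin (n+1) →₀ ℕ)} {k : ℕ} {p : Fin n →₀ ℕ} :
    p ∈ slice X k ↔ Finsupp.cons k p ∈ X := by
  unfold slice
  rw [Finset.mem_image]
  constructor
  · rintro ⟨m, hm, rfl⟩
    rw [Finset.mem_filter] at hm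
    rw [← hm.2, Finsupp.cons_tail]
    exact hm.1
  · intro h
    refine ⟨Finsupp.cons k p, Finset.mem_filter.mpr ⟨h, Finsupp.cons_zero _ _⟩, ?_⟩
    exact Finsupp.tail_cons _ _

lemma slice_closed {X : Finset (Fin (n+1) →₀ ℕ)} (hX : DownClosed X) (k : ℕ) :
    DownClosed (slice X k) := by
  intro p hp q hq
  rw [mem_slice] at hp ⊢
  refine hX _ hp _ ?_
  exact cons_le (by rw [Finsupp.cons_zero]) (by rwa [Finsupp.tail_cons])

lemma slice_anti {X : Finset (Fin (n+1) →₀ ℕ)} (hX : DownClosed X) (k : ℕ) :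
    slice X (k+1) ⊆ slice X k := by
  intro p hp
  rw [mem_slice] at hp ⊢
  refine hX _ hp _ ?_
  exact cons_le (by rw [Finsupp.cons_zero]; omega) (by rw [Finsupp.tail_cons])

lemma degCount_slice (X : Finset (Fin (n+1) →₀ ℕ)) (k e : ℕ) :
    degCount (slice X k) e = (X.filter fun m => m 0 = k ∧ monDeg m = k + e).card := by
  unfold degCount slice
  rw [Finset.filter_image, Finset.filter_filter]
  rw [Finset.card_image_of_injOn]
  · congr 1
    apply Finset.filter_congr
    intro m _
    constructor
    · rintro ⟨h1, h2⟩
      exact ⟨h1, by rw [monDeg_decomp m, h1, h2]⟩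
    · rintro ⟨h1, h2⟩
      refine ⟨h1, ?_⟩
      have := monDeg_decomp m
      omega
  · intro a ha b hb hab
    rw [Finset.coe_filter, Set.mem_setOf_eq] at ha hb
    rw [← Finsupp.cons_tail a, ← Finsupp.cons_tail b, ha.2.1, hb.2.1, hab]

lemma degCount_partition (X : Finset (Fin (n+1) →₀ ℕ)) (d : ℕ) :
    degCount X d = ∑ k ∈ Finset.range (d+1), degCount (slice X k) (d - k) := by
  rw [show degCount X d = (X.filter fun m => monDeg m = d).card from rfl,
    Finset.card_eq_sum_card_fiberwise (f := fun m => m 0) (t := Finset.range (d+1))]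
  · apply Finset.sum_congr rfl
    intro k hk
    rw [Finset.mem_range] at hk
    rw [degCount_slice X k (d-k), Finset.filter_filter]
    congr 1
    apply Finset.filter_congr
    intro m _
    constructor
    · rintro ⟨h1, h2⟩; exact ⟨h2, by omega⟩
    · rintro ⟨h1, h2⟩; exact ⟨by omega, h1⟩
  · intro m hm
    simp only [Finset.mem_coe, Finset.mem_filter] at hm
    simp only [Finset.mem_coe, Finset.mem_range]
    have := monDeg_decomp m
    omega

end Slice

/-- Macaulay's bound for the growth from degree 2 to degree 3. -/
theorem necessity_three : ∀ {n : ℕ} (X : Finset (Fin n →₀ ℕ)), DownClosed X →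
    degCount X 3 ≤ f (degCount X 2) := by
  intro n
  induction n with
  | zero =>
    intro X _
    have h0 : degCount X 3 = 0 := by
      unfold degCount
      rw [Finset.card_eq_zero, Finset.filter_eq_empty_iff]
      intro m _
      have : m = 0 := by ext i; exact i.elim0
      rw [this, monDeg_zero]
      omega
    rw [h0]
    exact Nat.zero_le _
  | succ n ih =>
    intro X hX
    have h2 : degCount X 2 =
        degCount (slice X 0) 2 + degCount (slice X 1) 1 + degCount (slice X 2) 0 := by
      rw [degCount_partition X 2, Finset.sum_range_succ, Finset.sum_range_succ,
        Finset.sum_range_succ]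
      norm_num
    have h3 : degCount X 3 = degCount (slice X 0) 3 + degCount (slice X 1) 2
        + degCount (slice X 2) 1 + degCount (slice X 3) 0 := by
      rw [degCount_partition X 3, Finset.sum_range_succ, Finset.sum_range_succ,
        Finset.sum_range_succ, Finset.sum_range_succ]
      norm_num
    -- h2 : degCount X 2 = degCount (slice X 0) 2 + degCount (slice X 1) 1 + degCount (slice X 2) 0
    -- h3 : degCount X 3 = s0 + q1 + p2 + e3
    have hs0 : degCount (slice X 0) 3 ≤ f (degCount (slice X 0) 2) :=
      ih _ (slice_closed hX 0)
    have hq1q0 : degCount (slice X 1) 2 ≤ degCount (slice X 0) 2 :=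
      degCount_mono (slice_anti hX 0) 2
    have hq1T : degCount (slice X 1) 2 ≤ T (degCount (slice X 1) 1) :=
      necessity_two (slice_closed hX 1)
    have hp2 : degCount (slice X 2) 1 ≤ degCount (slice X 1) 1 :=
      degCount_mono (slice_anti hX 1) 1
    have he3 : degCount (slice X 3) 0 ≤ degCount (slice X 2) 0 :=
      degCount_mono (slice_anti hX 2) 0
    have he2 : degCount (slice X 2) 0 ≤ 1 := degCount_zero_le_one _
    have hpe : 1 ≤ degCount (slice X 2) 1 → degCount (slice X 2) 0 = 1 := by
      intro hp
      obtain ⟨m, hm⟩ := Finset.card_pos.mp hp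
      rw [Finset.mem_filter] at hm
      exact degCount_zero_of_mem (slice_closed hX 2 m hm.1 0 (Finsupp.le_def.mpr fun i => Nat.zero_le _))
    have harith := main_arith hq1q0 hq1T hp2 he2 he3 hpe
    rw [h2, h3]
    omega

section Sufficiency

variable {n : ℕ}

lemma mon_le_zero {p : Fin n →₀ ℕ} (h : p ≤ 0) : p = 0 :=
  monDeg_eq_zero_iff.mp (Nat.le_zero.mp (le_of_le_of_eq (monDeg_mono h) monDeg_zero))

lemma support_mono_le {p m : Fin n →₀ ℕ} (h : p ≤ m) : p.support ⊆ m.support := by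
  intro i hi
  rw [Finsupp.mem_support_iff] at hi ⊢
  have := Finsupp.le_def.mp h i
  omega

lemma mons_mono {S S' : Finset (Fin n)} (h : S ⊆ S') (d : ℕ) : mons S d ⊆ mons S' d := by
  intro m hm
  rw [mem_mons] at hm ⊢
  exact ⟨hm.1, hm.2.trans h⟩

lemma split_at {p : Fin n →₀ ℕ} {v : Fin n} (h : p v = 1) :
    ∃ q : Fin n →₀ ℕ, p = Finsupp.single v 1 + q ∧ q v = 0 := by
  refine ⟨p - Finsupp.single v 1, ?_, ?_⟩
  · ext i
    rw [Finsupp.add_apply, Finsupp.tsub_apply]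
    rcases eq_or_ne i v with rfl | hne
    · rw [Finsupp.single_eq_same]; omega
    · rw [Finsupp.single_eq_of_ne' (Ne.symm hne)]; omega
  · rw [Finsupp.tsub_apply, Finsupp.single_eq_same]; omega

/-- Explicit construction of an order ideal with h-vector `(1, d1, d2, d3)`. -/
theorem sufficiency {d1 d2 d3 : ℕ} (h3 : 1 ≤ d3) (h2T : d2 ≤ T d1) (h3f : d3 ≤ f d2) :
    IsOSequence [1, d1, d2, d3] := by
  classical
  have hd2pos : 1 ≤ d2 := by
    by_contra hc
    have hz : d2 = 0 := by omega
    rw [hz, f_zero] at h3f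
    omega
  have hd1pos : 1 ≤ d1 := by
    by_contra hc
    have hz : d1 = 0 := by omega
    rw [hz] at h2T
    have : T 0 = 0 := T_zero
    omega
  obtain ⟨k, j, hjk, hrep⟩ := rep_exists d2
  have hkd1 : k ≤ d1 := by
    by_contra hc
    have h1 : T (d1 + 1) ≤ T k := T_mono (by omega)
    rw [T_succ] at h1
    omega
  have hjd1 : j ≤ d1 := by omega
  have hkd1' : 1 ≤ j → k + 1 ≤ d1 := by
    intro hj1
    by_contra hc
    have hkd : k = d1 := by omega
    rw [hkd] at hrep
    omega
  -- the distinguished extra variable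
  set v : Fin d1 := ⟨min k (d1 - 1), by omega⟩ with hv
  have hvval : 1 ≤ j → (v : ℕ) = k := by
    intro hj1
    have := hkd1' hj1
    simp only [hv]
    omega
  -- variable sets
  set Sk : Finset (Fin d1) := Finset.univ.map (Fin.castLEEmb hkd1) with hSk
  set Sj : Finset (Fin d1) := Finset.univ.map (Fin.castLEEmb hjd1) with hSj
  have hSk_mem : ∀ i : Fin d1, i ∈ Sk ↔ (i : ℕ) < k := by
    intro i
    rw [hSk, Finset.mem_map]
    constructor
    · rintro ⟨a, _, rfl⟩; exact a.2
    · intro h; exact ⟨⟨(i : ℕ), h⟩, Finset.mem_univ _, by ext; rfl⟩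
  have hSj_mem : ∀ i : Fin d1, i ∈ Sj ↔ (i : ℕ) < j := by
    intro i
    rw [hSj, Finset.mem_map]
    constructor
    · rintro ⟨a, _, rfl⟩; exact a.2
    · intro h; exact ⟨⟨(i : ℕ), h⟩, Finset.mem_univ _, by ext; rfl⟩
  have hSkcard : Sk.card = k := by rw [hSk, Finset.card_map, Finset.card_univ, Fintype.card_fin]
  have hSjcard : Sj.card = j := by rw [hSj, Finset.card_map, Finset.card_univ, Fintype.card_fin]
  have hSjSk : Sj ⊆ Sk := by
    intro i hi
    rw [hSj_mem] at hi
    rw [hSk_mem]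
    omega
  -- facts about monomials supported on Sj
  have hmons_j : ∀ m' ∈ mons Sj 2, 1 ≤ j ∧ m' v = 0 := by
    intro m' hm'
    rw [mem_mons] at hm'
    have hne : m' ≠ 0 := by
      intro h0
      rw [h0, monDeg_zero] at hm'
      omega
    obtain ⟨i, hi⟩ := Finsupp.support_nonempty_iff.mpr hne
    have hij : (i : ℕ) < j := (hSj_mem i).mp (hm'.2 hi)
    have hj1 : 1 ≤ j := by omega
    refine ⟨hj1, ?_⟩
    by_contra hc
    have hvs : v ∈ m'.support := Finsupp.mem_support_iff.mpr hc
    have := (hSj_mem v).mp (hm'.2 hvs)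
    have := hvval hj1
    omega
  -- the graded pieces
  set X1 : Finset (Fin d1 →₀ ℕ) :=
    Finset.univ.image (fun i : Fin d1 => Finsupp.single i 1) with hX1
  set X2 : Finset (Fin d1 →₀ ℕ) :=
    mons Sk 2 ∪ Sj.image (fun i => Finsupp.single v 1 + Finsupp.single i 1) with hX2
  set X3f : Finset (Fin d1 →₀ ℕ) :=
    mons Sk 3 ∪ (mons Sj 2).image (fun m => Finsupp.single v 1 + m) with hX3f
  -- degrees of the pieces
  have hdeg1 : ∀ m ∈ X1, monDeg m = 1 := by
    intro m hm
    rw [hX1, Finset.mem_image] at hm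
    obtain ⟨i, _, rfl⟩ := hm
    exact monDeg_single i 1
  have hdeg2 : ∀ m ∈ X2, monDeg m = 2 := by
    intro m hm
    rw [hX2, Finset.mem_union] at hm
    rcases hm with hm | hm
    · exact (mem_mons.mp hm).1
    · rw [Finset.mem_image] at hm
      obtain ⟨i, _, rfl⟩ := hm
      rw [monDeg_add, monDeg_single, monDeg_single]
  have hdeg3f : ∀ m ∈ X3f, monDeg m = 3 := by
    intro m hm
    rw [hX3f, Finset.mem_union] at hm
    rcases hm with hm | hm
    · exact (mem_mons.mp hm).1
    · rw [Finset.mem_image] at hm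
      obtain ⟨m', hm', rfl⟩ := hm
      rw [monDeg_add, monDeg_single, (mem_mons.mp hm').1]
  -- cardinalities
  have hX2card : X2.card = d2 := by
    rw [hX2, Finset.card_union_of_disjoint, card_mons, hSkcard, T_multichoose,
      Finset.card_image_of_injective _
        (fun a b hab => by
          have h2 : Finsupp.single a 1 = Finsupp.single b 1 := by
            exact add_left_cancel hab
          exact (Finsupp.single_left_inj one_ne_zero).mp h2),
      hSjcard]
    · omega
    · rw [Finset.disjoint_left]
      intro m hm hmi
      rw [Finset.mem_image] at hmi
      obtain ⟨i, hi, rfl⟩ := hmi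
      have hj1 : 1 ≤ j := by
        have := (hSj_mem i).mp hi
        omega
      have hmv : ((Finsupp.single v 1 + Finsupp.single i 1 : Fin d1 →₀ ℕ)) v ≠ 0 := by
        rw [Finsupp.add_apply, Finsupp.single_eq_same]
        omega
      have hvs := (mem_mons.mp hm).2 (Finsupp.mem_support_iff.mpr hmv)
      have := (hSk_mem v).mp hvs
      have := hvval hj1
      omega
  have hX3fcard : X3f.card = C3 k + T j := by
    rw [hX3f, Finset.card_union_of_disjoint, card_mons, hSkcard, C3_multichoose,
      Finset.card_image_of_injective _ (add_right_injective (Finsupp.single v 1)),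
      card_mons, hSjcard, T_multichoose]
    rw [Finset.disjoint_left]
    intro m hm hmi
    rw [Finset.mem_image] at hmi
    obtain ⟨m', hm', rfl⟩ := hmi
    obtain ⟨hj1, _⟩ := hmons_j m' hm'
    have hmv : ((Finsupp.single v 1 + m' : Fin d1 →₀ ℕ)) v ≠ 0 := by
      rw [Finsupp.add_apply, Finsupp.single_eq_same]
      omega
    have hvs := (mem_mons.mp hm).2 (Finsupp.mem_support_iff.mpr hmv)
    have := (hSk_mem v).mp hvs
    have := hvval hj1
    omega
  -- choose the degree-3 part
  have hd3le : d3 ≤ X3f.card := by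
    rw [hX3fcard]
    rw [hrep, f_rep hjk] at h3f
    exact h3f
  obtain ⟨X3, hX3sub, hX3card⟩ := Finset.exists_subset_card_eq hd3le
  have hdeg3 : ∀ m ∈ X3, monDeg m = 3 := fun m hm => hdeg3f m (hX3sub hm)
  -- the order ideal
  set X : Finset (Fin d1 →₀ ℕ) := ({0} ∪ X1 ∪ X2 ∪ X3 : Finset (Fin d1 →₀ ℕ)) with hX
  have hmemX : ∀ m, m ∈ X ↔ (m = 0 ∨ m ∈ X1 ∨ m ∈ X2 ∨ m ∈ X3) := by
    intro m
    rw [hX]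
    simp only [Finset.mem_union, Finset.mem_singleton, or_assoc]
  -- the key closure property in degree 2
  have hcore : ∀ m ∈ X3f, ∀ p ≤ m, monDeg p = 2 → p ∈ X2 := by
    intro m hm p hpm hpd
    rw [hX3f, Finset.mem_union] at hm
    rcases hm with hm | hm
    · -- m ∈ mons Sk 3
      rw [hX2, Finset.mem_union]
      left
      rw [mem_mons]
      exact ⟨hpd, (support_mono_le hpm).trans (mem_mons.mp hm).2⟩
    · rw [Finset.mem_image] at hm
      obtain ⟨m', hm', rfl⟩ := hm
      obtain ⟨hj1, hm'v⟩ := hmons_j m' hm'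
      have hmv : ((Finsupp.single v 1 + m' : Fin d1 →₀ ℕ)) v = 1 := by
        rw [Finsupp.add_apply, Finsupp.single_eq_same, hm'v]
      rcases Nat.eq_zero_or_pos (p v) with hpv | hpv
      · -- p avoids v, so p = m'
        have hpm' : p ≤ m' := by
          rw [Finsupp.le_def]
          intro i
          rcases eq_or_ne i v with rfl | hne
          · omega
          · have := Finsupp.le_def.mp hpm i
            rwa [Finsupp.add_apply, Finsupp.single_eq_of_ne' (Ne.symm hne), zero_add] at this
        have : p = m' := eq_of_le_of_monDeg_eq hpm' (by rw [hpd, (mem_mons.mp hm').1])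
        rw [hX2, Finset.mem_union]
        left
        rw [this]
        exact mons_mono hSjSk 2 hm'
      · -- p contains v
        have hpv1 : p v = 1 := by
          have := Finsupp.le_def.mp hpm v
          rw [hmv] at this
          omega
        obtain ⟨q, hq, hqv⟩ := split_at hpv1
        have hqd : monDeg q = 1 := by
          have := monDeg_add (Finsupp.single v 1) q
          rw [← hq, hpd, monDeg_single] at this
          omega
        have hqm' : q ≤ m' := by
          rw [Finsupp.le_def]
          intro i
          rcases eq_or_ne i v with rfl | hne
          · omega
          · have h1 := Finsupp.le_def.mp hpm i
            rw [Finsupp.add_apply, Finsupp.single_eq_of_ne' (Ne.symm hne), zero_add] at h1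
            have h2 : p i = q i := by
              rw [hq, Finsupp.add_apply, Finsupp.single_eq_of_ne' (Ne.symm hne), zero_add]
            omega
        obtain ⟨i, hqi⟩ := eq_single_of_monDeg_one hqd
        have hisupp : i ∈ m'.support := by
          apply support_mono_le hqm'
          rw [hqi, Finsupp.mem_support_iff, Finsupp.single_eq_same]
          omega
        have hiSj : i ∈ Sj := (mem_mons.mp hm').2 hisupp
        rw [hX2, Finset.mem_union]
        right
        rw [Finset.mem_image]
        exact ⟨i, hiSj, by rw [hq, hqi]⟩
  -- X is an order ideal
  have hideal : IsOrderIdeal X := by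
    constructor
    · exact ⟨0, (hmemX 0).mpr (Or.inl rfl)⟩
    · intro m hm p hpm
      rw [hmemX] at hm ⊢
      rcases hm with rfl | hm | hm | hm
      · exact Or.inl (mon_le_zero hpm)
      · have hd := hdeg1 m hm
        have hpd : monDeg p ≤ 1 := hd ▸ monDeg_mono hpm
        interval_cases hp : monDeg p
        · exact Or.inl (monDeg_eq_zero_iff.mp hp)
        · exact Or.inr (Or.inl (by rw [eq_of_le_of_monDeg_eq hpm (by omega)]; exact hm))
      · have hd := hdeg2 m hm
        have hpd : monDeg p ≤ 2 := hd ▸ monDeg_mono hpm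
        interval_cases hp : monDeg p
        · exact Or.inl (monDeg_eq_zero_iff.mp hp)
        · obtain ⟨i, rfl⟩ := eq_single_of_monDeg_one hp
          exact Or.inr (Or.inl (Finset.mem_image.mpr ⟨i, Finset.mem_univ i, rfl⟩))
        · exact Or.inr (Or.inr (Or.inl (by rw [eq_of_le_of_monDeg_eq hpm (by omega)]; exact hm)))
      · have hd := hdeg3 m hm
        have hpd : monDeg p ≤ 3 := hd ▸ monDeg_mono hpm
        interval_cases hp : monDeg p
        · exact Or.inl (monDeg_eq_zero_iff.mp hp)
        · obtain ⟨i, rfl⟩ := eq_single_of_monDeg_one hp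
          exact Or.inr (Or.inl (Finset.mem_image.mpr ⟨i, Finset.mem_univ i, rfl⟩))
        · exact Or.inr (Or.inr (Or.inl (hcore m (hX3sub hm) p hpm hp)))
        · exact Or.inr (Or.inr (Or.inr (by rw [eq_of_le_of_monDeg_eq hpm (by omega)]; exact hm)))
  -- the graded counts
  have hfilter0 : X.filter (fun m => monDeg m = 0) = {0} := by
    ext m
    rw [Finset.mem_filter, Finset.mem_singleton, hmemX]
    constructor
    · rintro ⟨_, hd⟩
      exact monDeg_eq_zero_iff.mp hd
    · rintro rfl
      exact ⟨Or.inl rfl, monDeg_zero⟩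
  have hfilter1 : X.filter (fun m => monDeg m = 1) = X1 := by
    ext m
    rw [Finset.mem_filter, hmemX]
    constructor
    · rintro ⟨hm, hd⟩
      rcases hm with rfl | hm | hm | hm
      · rw [monDeg_zero] at hd; omega
      · exact hm
      · have := hdeg2 m hm; omega
      · have := hdeg3 m hm; omega
    · intro hm
      exact ⟨Or.inr (Or.inl hm), hdeg1 m hm⟩
  have hfilter2 : X.filter (fun m => monDeg m = 2) = X2 := by
    ext m
    rw [Finset.mem_filter, hmemX]
    constructor
    · rintro ⟨hm, hd⟩
      rcases hm with rfl | hm | hm | hm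
      · rw [monDeg_zero] at hd; omega
      · have := hdeg1 m hm; omega
      · exact hm
      · have := hdeg3 m hm; omega
    · intro hm
      exact ⟨Or.inr (Or.inr (Or.inl hm)), hdeg2 m hm⟩
  have hfilter3 : X.filter (fun m => monDeg m = 3) = X3 := by
    ext m
    rw [Finset.mem_filter, hmemX]
    constructor
    · rintro ⟨hm, hd⟩
      rcases hm with rfl | hm | hm | hm
      · rw [monDeg_zero] at hd; omega
      · have := hdeg1 m hm; omega
      · have := hdeg2 m hm; omega
      · exact hm
    · intro hm
      exact ⟨Or.inr (Or.inr (Or.inr hm)), hdeg3 m hm⟩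
  have hfilter4 : ∀ i, X.filter (fun m => monDeg m = i + 4) = ∅ := by
    intro i
    rw [Finset.filter_eq_empty_iff]
    intro m hm
    rw [hmemX] at hm
    rcases hm with rfl | hm | hm | hm
    · rw [monDeg_zero]; omega
    · have := hdeg1 m hm; omega
    · have := hdeg2 m hm; omega
    · have := hdeg3 m hm; omega
  have hX1card : X1.card = d1 := by
    rw [hX1, Finset.card_image_of_injective _ (Finsupp.single_left_injective one_ne_zero),
      Finset.card_univ, Fintype.card_fin]
  -- conclude
  refine ⟨d1, X, hideal, ?_, ?_, ?_⟩
  · simp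
  · intro i
    match i with
    | 0 => show degCount X 0 = 1; unfold degCount; rw [hfilter0, Finset.card_singleton]
    | 1 => show degCount X 1 = d1; unfold degCount; rw [hfilter1, hX1card]
    | 2 => show degCount X 2 = d2; unfold degCount; rw [hfilter2, hX2card]
    | 3 => show degCount X 3 = d3; unfold degCount; rw [hfilter3, hX3card]
    | (i+4) =>
      show degCount X (i+4) = [1, d1, d2, d3].getD (i+4) 0
      unfold degCount
      rw [hfilter4 i, Finset.card_empty]
      rfl
  · show degCount X ([1, d1, d2, d3].length - 1) ≠ 0
    have : [1, d1, d2, d3].length - 1 = 3 := rfl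
    rw [this]
    unfold degCount
    rw [hfilter3, hX3card]
    omega

end Sufficiency

/-- Numeric consequences of being an O-sequence of length 4. -/
lemma extract4 {a0 a1 a2 a3 : ℕ} (h : IsOSequence [a0, a1, a2, a3]) :
    a3 ≠ 0 ∧ a2 ≠ 0 ∧ a1 ≠ 0 ∧ a2 ≤ T a1 ∧ a3 ≤ f a2 := by
  obtain ⟨r, X, hid, _, hcnt, hlast⟩ := h
  have hdc : DownClosed X := hid.2
  have h1 : degCount X 1 = a1 := hcnt 1
  have h2 : degCount X 2 = a2 := hcnt 2
  have h3 : degCount X 3 = a3 := hcnt 3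
  have hlast3 : degCount X 3 ≠ 0 := hlast
  have hx2 : degCount X 2 ≠ 0 := degCount_pos_step hdc hlast3
  have hx1 : degCount X 1 ≠ 0 := degCount_pos_step hdc hx2
  refine ⟨by omega, by omega, by omega, ?_, ?_⟩
  · have hn := necessity_two hdc
    rw [h1, h2] at hn
    exact hn
  · have := necessity_three X hdc
    rw [h2, h3] at this
    exact this

/-- Numeric consequences of being an O-sequence of length 3. -/
lemma extract3 {a0 a1 a2 : ℕ} (h : IsOSequence [a0, a1, a2]) :
    a2 ≠ 0 ∧ a1 ≠ 0 ∧ a2 ≤ T a1 := by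
  obtain ⟨r, X, hid, _, hcnt, hlast⟩ := h
  have hdc : DownClosed X := hid.2
  have h1 : degCount X 1 = a1 := hcnt 1
  have h2 : degCount X 2 = a2 := hcnt 2
  have hlast2 : degCount X 2 ≠ 0 := hlast
  have hx1 : degCount X 1 ≠ 0 := degCount_pos_step hdc hlast2
  refine ⟨by omega, by omega, ?_⟩
  have hn := necessity_two hdc
  rw [h1, h2] at hn
  exact hn

end ShiftedSum

/-- If `h = (1, r-1, a, b)` and `h' = (1, r', c)` are differentiable O-sequences with
`r' - 1 ≤ r - 2` and `c - r' ≤ a - (r-1)`, then the shifted sum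
`(1, r, a + r', b + c)` is a differentiable O-sequence. -/
theorem shifted_sum_differentiable (r a b r' c : ℕ)
    (hO : IsOSequence [1, r - 1, a, b]) (hD : IsDifferentiable [1, r - 1, a, b])
    (hO' : IsOSequence [1, r', c]) (hD' : IsDifferentiable [1, r', c])
    (hyp1 : r' - 1 ≤ r - 2) (hyp2 : c - r' ≤ a - (r - 1)) :
    IsOSequence [1, r, a + r', b + c] ∧ IsDifferentiable [1, r, a + r', b + c] := by
  open ShiftedSum in
  -- extract numeric information from the hypotheses
  obtain ⟨hb0, ha0, hr0, haT, hbf⟩ := ShiftedSum.extract4 hO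
  have hch : (1:ℕ) ≤ r - 1 ∧ r - 1 ≤ a ∧ a ≤ b := by
    have := hD.1
    simp only [List.Chain', List.isChain_cons_cons, List.isChain_singleton, and_true] at this
    exact this
  have hdiffh : diffSeq [1, r - 1, a, b] = [1, r - 1 - 1, a - (r - 1), b - a] := rfl
  have hDo := hD.2
  rw [hdiffh] at hDo
  obtain ⟨hba0, har0, hr20, harT, hbaf⟩ := ShiftedSum.extract4 hDo
  obtain ⟨hc0, hr'0, hcT⟩ := ShiftedSum.extract3 hO'
  have hch' : (1:ℕ) ≤ r' ∧ r' ≤ c := by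
    have := hD'.1
    simp only [List.Chain', List.isChain_cons_cons, List.isChain_singleton, and_true] at this
    exact this
  have hdiffh' : diffSeq [1, r', c] = [1, r' - 1, c - r'] := rfl
  have hDo' := hD'.2
  rw [hdiffh'] at hDo'
  obtain ⟨hcr0, hr'10, hcrT⟩ := ShiftedSum.extract3 hDo'
  -- basic numeric consequences
  have hr3 : 3 ≤ r := by omega
  have har : r ≤ a := by omega
  have hab : a + 1 ≤ b := by omega
  have hr'2 : 2 ≤ r' := by omega
  have hcr' : r' + 1 ≤ c := by omega
  have hr'r : r' ≤ r - 1 := by omega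
  have hca : c ≤ a := by omega
  -- the target sequence is an O-sequence
  have hTr : T r = T (r - 1) + r := by
    have := T_succ (r - 1)
    rw [show r - 1 + 1 = r by omega] at this
    omega
  have htgt : IsOSequence [1, r, a + r', b + c] := by
    have h2T : a + r' ≤ T r := by omega
    have h3f : b + c ≤ f (a + r') := by
      have hc1 := C1 a r'
      have hmin : c ≤ min a (T r') := le_min hca hcT
      omega
    have h31 : 1 ≤ b + c := by omega
    have := sufficiency (d1 := r) (d2 := a + r') (d3 := b + c) h31 h2T h3f
    exact this
  refine ⟨htgt, ?_, ?_⟩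
  · -- chain condition
    simp only [List.Chain', List.isChain_cons_cons, List.isChain_singleton, and_true]
    omega
  · -- the difference sequence is an O-sequence
    have hdifft : diffSeq [1, r, a + r', b + c] =
        [1, r - 1, a + r' - r, b + c - (a + r')] := rfl
    rw [hdifft]
    have hnorm : r - 1 - 1 = r - 2 := by omega
    rw [hnorm] at harT
    have hTr1 : T (r - 1) = T (r - 2) + (r - 1) := by
      have := T_succ (r - 2)
      rw [show r - 2 + 1 = r - 1 by omega] at this
      omega
    have h2T : a + r' - r ≤ T (r - 1) := by omega
    have h3f : b + c - (a + r') ≤ f (a + r' - r) := by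
      have hc1 := C1 (a - (r - 1)) (r' - 1)
      rw [show a - (r - 1) + (r' - 1) = a + r' - r by omega] at hc1
      have hmin : c - r' ≤ min (a - (r - 1)) (T (r' - 1)) := le_min hyp2 hcrT
      omega
    have h31 : 1 ≤ b + c - (a + r') := by omega
    exact sufficiency h31 h2T h3f
end

section
/- Let M be a loopless matroid on a finite ground set with rank at most 3. Suppose M has no coloops, and that for every element w of the ground set, the deletion M∖w has a coloop. Then any two distinct circuits of M are disjoint (that is, M is a complete intersection matroid). -/
/-- `matroidF M i` is the number `f_{i-1}` of independent sets of `M` of cardinality `i`. -/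
noncomputable def matroidF {α : Type*} (M : Matroid α) (i : ℕ) : ℕ :=
  {I : Set α | M.Indep I ∧ I.ncard = i}.ncard

/-- The `j`-th entry of the h-vector of a rank-`d` matroid `M`:
`h_j = ∑_{i=0}^{j} (-1)^{j-i} C(d-i, j-i) f_{i-1}`. -/
noncomputable def matroidH {α : Type*} (M : Matroid α) (d j : ℕ) : ℤ :=
  ∑ i ∈ Finset.range (j + 1),
    (-1 : ℤ) ^ (j - i) * ((d - i).choose (j - i)) * (matroidF M i)

/-- A loop: an element of the ground set belonging to no independent set. -/
def IsLoopElem {α : Type*} (M : Matroid α) (v : α) : Prop :=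
  v ∈ M.E ∧ ¬ M.Indep {v}

/-- A coloop: an element of the ground set contained in every basis. -/
def IsColoopElem {α : Type*} (M : Matroid α) (v : α) : Prop :=
  v ∈ M.E ∧ ∀ B, M.IsBase B → v ∈ B

/-- A circuit: a minimal dependent set. -/
def IsCircuitSet {α : Type*} (M : Matroid α) (C : Set α) : Prop :=
  C ⊆ M.E ∧ ¬ M.Indep C ∧ ∀ D, D ⊂ C → M.Indep D

open Set
open scoped Matroid

/-- Key lemma: if `e ∈ R ⊆ M.E` and `e` is in the closure of `R \ {e}`, then the
restriction of `M` to `R` has a base avoiding `e`. -/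
lemma exists_base_avoid {α : Type*} (M : Matroid α) (R : Set α) (e : α)
    (hR : R ⊆ M.E) (heR : e ∈ R) (hcl : e ∈ M.closure (R \ {e})) :
    ∃ B, (M ↾ R).IsBase B ∧ e ∉ B := by
  obtain ⟨B, hB⟩ := M.exists_isBasis (R \ {e}) ((diff_subset).trans hR)
  have hBR : M.IsBasis B R := by
    refine hB.indep.isBasis_of_subset_of_subset_closure (hB.subset.trans diff_subset) ?_
    have hcl' : M.closure B = M.closure (R \ {e}) := hB.closure_eq_closure
    intro x hx
    rcases eq_or_ne x e with rfl | hxe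
    · rw [hcl']; exact hcl
    · rw [hcl']; exact M.subset_closure (R \ {e}) ((diff_subset).trans hR) ⟨hx, hxe⟩
  exact ⟨B, hBR.restrict_isBase, fun heB => (hB.subset heB).2 rfl⟩

lemma not_coloop_avoid {α : Type*} (M : Matroid α) (R : Set α) (e : α)
    (hR : R ⊆ M.E) (heR : e ∈ R) (hcl : e ∈ M.closure (R \ {e})) :
    ¬ IsColoopElem (M ↾ R) e := by
  obtain ⟨B, hB, heB⟩ := exists_base_avoid M R e hR heR hcl
  exact fun h => heB (h.2 B hB)

/-- An element of a circuit is in the closure of the rest of the circuit. -/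
lemma mem_closure_circuit_diff {α : Type*} (M : Matroid α) (C : Set α) (x : α)
    (hC : IsCircuitSet M C) (hx : x ∈ C) : x ∈ M.closure (C \ {x}) := by
  have hI : M.Indep (C \ {x}) := hC.2.2 _ (Set.sdiff_singleton_ssubset.mpr hx)
  rw [hI.mem_closure_iff_of_notMem (fun h => h.2 rfl)]
  rw [insert_diff_singleton, insert_eq_of_mem hx]
  exact ⟨hC.2.1, hC.1⟩

/-- A finite dependent subset of the ground set contains a circuit. -/
lemma exists_circuit_subset {α : Type*} (M : Matroid α) :
    ∀ (n : ℕ) (D : Set α), D.Finite → D ⊆ M.E → ¬ M.Indep D → D.ncard ≤ n →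
      ∃ C, C ⊆ D ∧ IsCircuitSet M C := by
  intro n
  induction n with
  | zero =>
    intro D hfin hDE hdep hcard
    rw [Nat.le_zero, Set.ncard_eq_zero hfin] at hcard
    exact absurd (hcard ▸ M.empty_indep) hdep
  | succ n ih =>
    intro D hfin hDE hdep hcard
    by_cases h : ∀ D', D' ⊂ D → M.Indep D'
    · exact ⟨D, subset_rfl, hDE, hdep, h⟩
    · push_neg at h
      obtain ⟨D', hD'D, hD'dep⟩ := h
      have hlt : D'.ncard < D.ncard := Set.ncard_lt_ncard hD'D hfin
      obtain ⟨C, hCD', hC⟩ := ih D' (hfin.subset hD'D.subset) (hD'D.subset.trans hDE)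
        hD'dep (by omega)
      exact ⟨C, hCD'.trans hD'D.subset, hC⟩

/-- Symmetry lemma: a coloop `e` of `M \ w` (when `M` itself has no coloops)
lies in exactly the circuits of `M` containing `w`. -/
lemma series_pair {α : Type*} (M : Matroid α) (w e : α) (hw : w ∈ M.E)
    (hcol : IsColoopElem (M ↾ (M.E \ {w})) e) (hnc : ¬ IsColoopElem M e) :
    e ∈ M.E ∧ e ≠ w ∧ ∀ C, IsCircuitSet M C → (e ∈ C ↔ w ∈ C) := by
  have heE : e ∈ M.E \ {w} := hcol.1
  have hR : M.E \ {w} ⊆ M.E := diff_subset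
  refine ⟨heE.1, heE.2, fun C hC => ⟨?_, ?_⟩⟩
  · -- e ∈ C → w ∈ C
    intro heC
    by_contra hwC
    have hCR : C ⊆ M.E \ {w} := fun y hy => ⟨hC.1 hy, fun h => hwC (h ▸ hy)⟩
    have h1 : e ∈ M.closure ((M.E \ {w}) \ {e}) :=
      M.closure_subset_closure (diff_subset_diff_left hCR)
        (mem_closure_circuit_diff M C e hC heC)
    exact not_coloop_avoid M (M.E \ {w}) e hR heE h1 hcol
  · -- w ∈ C → e ∈ C
    intro hwC
    by_contra heC
    -- e is not a coloop of M, so some base avoids e, so e ∈ cl(E \ {e})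
    have hbe : ∃ B, M.IsBase B ∧ e ∉ B := by
      by_contra h
      push_neg at h
      exact hnc ⟨heE.1, h⟩
    obtain ⟨B, hB, heB⟩ := hbe
    have hBsub : B ⊆ M.E \ {e} := fun y hy => ⟨hB.subset_ground hy, fun h => heB (h ▸ hy)⟩
    have he1 : e ∈ M.closure (M.E \ {e}) := by
      have := M.closure_subset_closure hBsub
      rw [hB.closure_eq] at this
      exact this heE.1
    -- w ∈ cl (E \ {e, w})
    have hCsub : C \ {w} ⊆ (M.E \ {e}) \ {w} := fun y hy =>
      ⟨⟨hC.1 hy.1, fun h => heC (h ▸ hy.1)⟩, hy.2⟩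
    have hw1 : w ∈ M.closure ((M.E \ {e}) \ {w}) :=
      M.closure_subset_closure hCsub (mem_closure_circuit_diff M C w hC hwC)
    have hins : insert w ((M.E \ {e}) \ {w}) = M.E \ {e} := by
      ext y
      simp only [mem_insert_iff, mem_diff, mem_singleton_iff]
      constructor
      · rintro (rfl | h)
        · exact ⟨hw, fun h => heE.2 h.symm⟩
        · exact h.1
      · intro h
        rcases eq_or_ne y w with rfl | hy
        · exact Or.inl rfl
        · exact Or.inr ⟨h, hy⟩
    have he2 : e ∈ M.closure ((M.E \ {e}) \ {w}) := by
      have := M.closure_insert_eq_of_mem_closure hw1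
      rw [hins] at this
      rw [← this]
      exact he1
    have heq : (M.E \ {w}) \ {e} = (M.E \ {e}) \ {w} := by
      rw [diff_diff_comm]
    exact not_coloop_avoid M (M.E \ {w}) e hR heE (heq ▸ he2) hcol

/-- Let `M` be a loopless matroid of rank at most 3 on a finite ground set with no
coloops, such that for every element `w` the deletion `M \ w` has a coloop. Then any
two distinct circuits of `M` are disjoint, i.e. `M` is a complete intersection. -/
theorem deletion_cones_implies_complete_intersection {α : Type*} (M : Matroid α)
    (hfin : M.E.Finite)
    (hloopless : ∀ v ∈ M.E, M.Indep {v})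
    (hrank : ∀ B, M.IsBase B → B.ncard ≤ 3)
    (hnc : ∀ e, ¬ IsColoopElem M e)
    (hdel : ∀ w ∈ M.E, ∃ e, IsColoopElem (M.restrict (M.E \ {w})) e) :
    ∀ C₁ C₂, IsCircuitSet M C₁ → IsCircuitSet M C₂ → C₁ ≠ C₂ → Disjoint C₁ C₂ := by
  intro C₁ C₂ hC₁ hC₂ hne
  by_contra hdisj
  obtain ⟨x, hx1, hx2⟩ := Set.not_disjoint_iff.1 hdisj
  -- distinct circuits are incomparable
  have hns1 : ¬ C₁ ⊆ C₂ := fun h => hC₁.2.1 (hC₂.2.2 _ (h.ssubset_of_ne hne))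
  have hns2 : ¬ C₂ ⊆ C₁ := fun h => hC₂.2.1 (hC₁.2.2 _ (h.ssubset_of_ne (Ne.symm hne)))
  obtain ⟨a, ha1, ha2⟩ := Set.not_subset.1 hns1
  obtain ⟨b, hb2, hb1⟩ := Set.not_subset.1 hns2
  -- series partners
  have hxE : x ∈ M.E := hC₁.1 hx1
  have haE : a ∈ M.E := hC₁.1 ha1
  have hbE : b ∈ M.E := hC₂.1 hb2
  obtain ⟨x', hx'col⟩ := hdel x hxE
  obtain ⟨hx'E, hx'ne, hx'circ⟩ := series_pair M x x' hxE hx'col (hnc x')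
  obtain ⟨a', ha'col⟩ := hdel a haE
  obtain ⟨ha'E, ha'ne, ha'circ⟩ := series_pair M a a' haE ha'col (hnc a')
  obtain ⟨b', hb'col⟩ := hdel b hbE
  obtain ⟨hb'E, hb'ne, hb'circ⟩ := series_pair M b b' hbE hb'col (hnc b')
  have hx'1 : x' ∈ C₁ := (hx'circ C₁ hC₁).2 hx1
  have hx'2 : x' ∈ C₂ := (hx'circ C₂ hC₂).2 hx2
  have ha'1 : a' ∈ C₁ := (ha'circ C₁ hC₁).2 ha1
  have ha'2 : a' ∉ C₂ := fun h => ha2 ((ha'circ C₂ hC₂).1 h)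
  have hb'2 : b' ∈ C₂ := (hb'circ C₂ hC₂).2 hb2
  have hb'1 : b' ∉ C₁ := fun h => hb1 ((hb'circ C₁ hC₁).1 h)
  set I : Set α := {x, x', a', b'} with hIdef
  have hIE : I ⊆ M.E := by
    rintro y (rfl | rfl | rfl | rfl)
    exacts [hxE, hx'E, ha'E, hb'E]
  have haI : a ∉ I := by
    rintro (rfl | rfl | rfl | rfl)
    · exact ha2 hx2
    · exact ha2 hx'2
    · exact ha'ne.symm rfl
    · exact ha2 hb'2
  have hbI : b ∉ I := by
    rintro (rfl | rfl | rfl | rfl)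
    · exact hb1 hx1
    · exact hb1 hx'1
    · exact hb1 ha'1
    · exact hb'ne.symm rfl
  have hIindep : M.Indep I := by
    by_contra hIdep
    obtain ⟨C, hCI, hC⟩ := exists_circuit_subset M I.ncard I (Set.toFinite _) hIE hIdep le_rfl
    have ha'C : a' ∉ C := fun h => haI (hCI ((ha'circ C hC).1 h))
    have hb'C : b' ∉ C := fun h => hbI (hCI ((hb'circ C hC).1 h))
    have hCxx' : C ⊆ ({x, x'} : Set α) := by
      intro y hy
      rcases hCI hy with rfl | rfl | rfl | rfl
      · exact Or.inl rfl
      · exact Or.inr rfl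
      · exact absurd hy ha'C
      · exact absurd hy hb'C
    have hss : ({x, x'} : Set α) ⊂ C₁ := by
      refine ⟨by rintro y (rfl | rfl); exacts [hx1, hx'1], fun h => ?_⟩
      rcases h ha1 with rfl | rfl
      · exact ha2 hx2
      · exact ha2 hx'2
    exact hC.2.1 ((hC₁.2.2 _ hss).subset hCxx')
  obtain ⟨B, hB, hIB⟩ := hIindep.exists_isBase_superset
  have hBfin : B.Finite := hfin.subset hB.subset_ground
  have hxx' : x ≠ x' := hx'ne.symm
  have hxa' : x ≠ a' := fun h => ha'2 (h ▸ hx2)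
  have hxb' : x ≠ b' := fun h => hb'1 (h ▸ hx1)
  have hx'a' : x' ≠ a' := fun h => ha'2 (h ▸ hx'2)
  have hx'b' : x' ≠ b' := fun h => hb'1 (h ▸ hx'1)
  have ha'b' : a' ≠ b' := fun h => hb'1 (h ▸ ha'1)
  have hIcard : I.ncard = 4 := by
    have h1 : x ∉ ({x', a', b'} : Set α) := by simp [hxx', hxa', hxb']
    have h2 : x' ∉ ({a', b'} : Set α) := by simp [hx'a', hx'b']
    rw [hIdef, Set.ncard_insert_of_notMem h1, Set.ncard_insert_of_notMem h2,
      Set.ncard_pair ha'b']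
  have := Set.ncard_le_ncard hIB hBfin
  have := hrank B hB
  omega
end

section
/- For every integer r ≥ 1, the sequence (1, r, C(r+1,2), C(r,2)+1) is a pure O-sequence, where C(n,k) denotes the binomial coefficient. -/
namespace PureSpecialAux

open Multiset Finset

variable (k : ℕ)

/-- degree-3 generators of the form `x₀ · (squarefree-or-not degree-2 monomial in the
other variables)`. -/
def cover (s : Sym (Fin k) 2) : Multiset (Fin (k+1)) :=
  (0 : Fin (k+1)) ::ₘ (s : Multiset (Fin k)).map Fin.succ

lemma card_cover (s : Sym (Fin k) 2) : Multiset.card (cover k s) = 3 := by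
  simp [cover, s.2]

lemma count_zero_cover (s : Sym (Fin k) 2) : count (0 : Fin (k+1)) (cover k s) = 1 := by
  have : count (0 : Fin (k+1)) ((s : Multiset (Fin k)).map Fin.succ) = 0 := by
    rw [count_eq_zero]
    simp only [Multiset.mem_map]
    rintro ⟨a, -, ha⟩
    exact (Fin.succ_ne_zero a) ha
  simp [cover, this]

lemma cover_injective : Function.Injective (cover k) := by
  intro s t h
  unfold cover at h
  rw [Multiset.cons_inj_right] at h
  exact Sym.coe_injective (Multiset.map_injective (Fin.succ_injective k) h)

/-- all the degree 3 monomials in our order ideal -/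
def S3 : Finset (Multiset (Fin (k+1))) :=
  insert (Multiset.replicate 3 (0 : Fin (k+1)))
    ((Finset.univ : Finset (Sym (Fin k) 2)).image (cover k))

/-- the monomials of degree `i`, for `i ≤ 2` -/
def M (i : ℕ) : Finset (Multiset (Fin (k+1))) :=
  (Finset.univ : Finset (Sym (Fin (k+1)) i)).image (fun s : Sym (Fin (k+1)) i => (s : Multiset (Fin (k+1))))

lemma mem_M (i : ℕ) (s : Multiset (Fin (k+1))) : s ∈ M k i ↔ Multiset.card s = i := by
  constructor
  · rintro h
    rw [M, Finset.mem_image] at h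
    obtain ⟨t, -, rfl⟩ := h
    exact t.2
  · intro h
    rw [M, Finset.mem_image]
    exact ⟨⟨s, h⟩, Finset.mem_univ _, rfl⟩

lemma card_of_mem_S3 {s : Multiset (Fin (k+1))} (h : s ∈ S3 k) : Multiset.card s = 3 := by
  rw [S3, Finset.mem_insert] at h
  rcases h with rfl | h
  · simp
  · rw [Finset.mem_image] at h
    obtain ⟨t, -, rfl⟩ := h
    exact card_cover k t

def Y : Finset (Multiset (Fin (k+1))) := M k 0 ∪ M k 1 ∪ M k 2 ∪ S3 k

lemma mem_Y {s : Multiset (Fin (k+1))} : s ∈ Y k ↔ Multiset.card s ≤ 2 ∨ s ∈ S3 k := by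
  rw [Y]
  simp only [Finset.mem_union, mem_M]
  constructor
  · rintro (((h|h)|h)|h) <;> [omega; omega; omega; exact Or.inr h]
  · rintro (h|h)
    · interval_cases hc : Multiset.card s <;> simp_all
    · exact Or.inr h

noncomputable def XX : Finset (Fin (k+1) →₀ ℕ) := (Y k).image Multiset.toFinsupp

lemma exists_map_succ (t : Multiset (Fin (k+1))) (h : ∀ x ∈ t, x ≠ 0) :
    ∃ u : Multiset (Fin k), t = u.map Fin.succ := by
  induction t using Multiset.induction with
  | empty => exact ⟨0, rfl⟩
  | cons a t ih =>
    obtain ⟨u, rfl⟩ := ih (fun x hx => h x (mem_cons_of_mem hx))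
    obtain ⟨a', rfl⟩ := Fin.eq_succ_of_ne_zero (h a (mem_cons_self a _))
    exact ⟨a' ::ₘ u, by simp⟩

lemma S3_subset_Y : S3 k ⊆ Y k := by
  intro s hs
  rw [mem_Y]
  exact Or.inr hs

/-- every element of `Y` is dominated by an element of `S3`. -/
lemma exists_S3_le {s : Multiset (Fin (k+1))} (hs : s ∈ Y k) :
    ∃ p ∈ S3 k, s ≤ p := by
  rw [mem_Y] at hs
  rcases hs with hs | hs
  swap
  · exact ⟨s, hs, le_refl s⟩
  set t := s.filter (fun x => ¬ x = 0) with ht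
  have hsplit : s.filter (fun x => x = 0) + t = s := Multiset.filter_add_not _ s
  have hrep : s.filter (fun x => x = 0) = replicate (count (0 : Fin (k+1)) s) 0 :=
    Multiset.filter_eq' s 0
  have hcards : Multiset.card s = count (0 : Fin (k+1)) s + Multiset.card t := by
    conv_lhs => rw [← hsplit]
    rw [Multiset.card_add, hrep, Multiset.card_replicate]
  by_cases hT : t = 0
  · -- s consists only of zeros
    refine ⟨Multiset.replicate 3 (0 : Fin (k+1)), Finset.mem_insert_self _ _, ?_⟩
    rw [← hsplit, hT, add_zero, hrep]
    exact Multiset.replicate_le_replicate 0 |>.2 (by omega)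
  · obtain ⟨j, hj⟩ := Multiset.exists_mem_of_ne_zero hT
    have hj0 : ¬ j = 0 := by
      have h' := hj; rw [ht, Multiset.mem_filter] at h'; exact h'.2
    have htcard : 1 ≤ Multiset.card t := Multiset.card_pos.2 hT
    set t' := t + replicate (2 - Multiset.card t) j with ht'
    have ht'card : Multiset.card t' = 2 := by
      rw [ht', Multiset.card_add, Multiset.card_replicate]
      omega
    have ht'ne : ∀ x ∈ t', x ≠ 0 := by
      intro x hx
      rw [ht', Multiset.mem_add] at hx
      rcases hx with hx | hx
      · rw [ht, Multiset.mem_filter] at hx; exact hx.2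
      · rw [Multiset.eq_of_mem_replicate hx]; exact hj0
    obtain ⟨u, hu⟩ := exists_map_succ k t' ht'ne
    have hucard : Multiset.card u = 2 := by
      rw [hu, Multiset.card_map] at ht'card; exact ht'card
    refine ⟨cover k ⟨u, hucard⟩, ?_, ?_⟩
    · exact Finset.mem_insert_of_mem (Finset.mem_image_of_mem _ (Finset.mem_univ _))
    · have : cover k ⟨u, hucard⟩ = (0 : Fin (k+1)) ::ₘ t' := by
        unfold cover; congr 1; exact hu.symm
      rw [this, ← Multiset.singleton_add, ← hsplit, hrep]
      refine add_le_add ?_ (Multiset.le_add_right t _)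
      have : ({(0 : Fin (k+1))} : Multiset (Fin (k+1))) = replicate 1 0 := rfl
      rw [this]
      exact Multiset.replicate_le_replicate 0 |>.2 (by omega)

lemma card_le_three_of_mem_Y {s : Multiset (Fin (k+1))} (hs : s ∈ Y k) :
    Multiset.card s ≤ 3 := by
  rw [mem_Y] at hs
  rcases hs with hs | hs
  · omega
  · exact (card_of_mem_S3 k hs).le

lemma Y_lower {s t : Multiset (Fin (k+1))} (hs : s ∈ Y k) (hts : t ≤ s) : t ∈ Y k := by
  rcases Nat.lt_or_ge (Multiset.card t) 3 with h | h
  · rw [mem_Y]; left; omega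
  · have h3 : Multiset.card s ≤ 3 := card_le_three_of_mem_Y k hs
    have hc : Multiset.card s ≤ Multiset.card t := by
      have := Multiset.card_le_card hts
      omega
    rwa [Multiset.eq_of_le_of_card_le hts hc]

lemma monDeg_toFinsupp (s : Multiset (Fin (k+1))) :
    monDeg (Multiset.toFinsupp s) = Multiset.card s :=
  Multiset.toFinsupp_sum_eq s

lemma toFinsupp_le_toFinsupp {s t : Multiset (Fin (k+1))} :
    Multiset.toFinsupp s ≤ Multiset.toFinsupp t ↔ s ≤ t :=
  Finsupp.orderIsoMultiset.symm.le_iff_le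

lemma degCount_XX (i : ℕ) :
    degCount (XX k) i = ((Y k).filter fun s => Multiset.card s = i).card := by
  rw [degCount, XX, Finset.filter_image]
  rw [Finset.card_image_of_injective _ Multiset.toFinsupp.injective]
  congr 1
  apply Finset.filter_congr
  intro s _
  rw [monDeg_toFinsupp]

lemma filter_Y_of_le_two (i : ℕ) (hi : i ≤ 2) :
    (Y k).filter (fun s => Multiset.card s = i) = M k i := by
  ext s
  simp only [Finset.mem_filter, mem_M]
  constructor
  · rintro ⟨-, h⟩; exact h
  · intro h; exact ⟨by rw [mem_Y]; left; omega, h⟩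

lemma filter_Y_three :
    (Y k).filter (fun s => Multiset.card s = 3) = S3 k := by
  ext s
  simp only [Finset.mem_filter, mem_Y]
  constructor
  · rintro ⟨hs | hs, h3⟩
    · omega
    · exact hs
  · intro h; exact ⟨Or.inr h, card_of_mem_S3 k h⟩

lemma filter_Y_ge_four (i : ℕ) (hi : 4 ≤ i) :
    (Y k).filter (fun s => Multiset.card s = i) = ∅ := by
  rw [Finset.filter_eq_empty_iff]
  intro s hs
  have := card_le_three_of_mem_Y k hs
  omega

lemma card_M (i : ℕ) : (M k i).card = (k + i).choose i := by
  rw [M, Finset.card_image_of_injective _ Sym.coe_injective, Finset.card_univ,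
    Sym.card_sym_eq_choose]
  simp

lemma card_S3 : (S3 k).card = (k+1).choose 2 + 1 := by
  rw [S3, Finset.card_insert_of_notMem, Finset.card_image_of_injective _ (cover_injective k),
    Finset.card_univ, Sym.card_sym_eq_choose]
  · simp [add_comm]
  · intro h
    rw [Finset.mem_image] at h
    obtain ⟨t, -, ht⟩ := h
    have h1 := count_zero_cover k t
    rw [ht, Multiset.count_replicate_self] at h1
    omega

end PureSpecialAux

/-- For every integer `r ≥ 1`, the sequence `(1, r, C(r+1,2), C(r,2)+1)` is a pure
O-sequence. -/
theorem pure_special_sequence (r : ℕ) (hr : 1 ≤ r) :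
    IsPureOSequence [1, r, (r + 1).choose 2, r.choose 2 + 1] := by
  obtain ⟨k, rfl⟩ : ∃ k, r = k + 1 := ⟨r - 1, (Nat.succ_pred_eq_of_pos hr).symm⟩
  have hdc : ∀ i, degCount (PureSpecialAux.XX k) i =
      [1, k + 1, (k + 1 + 1).choose 2, (k + 1).choose 2 + 1].getD i 0 := by
    intro i
    rw [PureSpecialAux.degCount_XX]
    match i with
    | 0 => rw [PureSpecialAux.filter_Y_of_le_two k 0 (by omega), PureSpecialAux.card_M]; simp
    | 1 => rw [PureSpecialAux.filter_Y_of_le_two k 1 (by omega), PureSpecialAux.card_M]; simp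
    | 2 =>
      rw [PureSpecialAux.filter_Y_of_le_two k 2 (by omega), PureSpecialAux.card_M]
      simp [Nat.add_assoc]
    | 3 => rw [PureSpecialAux.filter_Y_three, PureSpecialAux.card_S3]; simp
    | (n+4) => rw [PureSpecialAux.filter_Y_ge_four k _ (by omega)]; simp
  refine ⟨k + 1, PureSpecialAux.XX k, ⟨?_, ?_⟩, ?_, ?_, ?_, ?_⟩
  · refine ⟨Multiset.toFinsupp 0, Finset.mem_image_of_mem _ ?_⟩
    rw [PureSpecialAux.mem_Y]
    left
    simp
  · intro m hm n hnm
    rw [PureSpecialAux.XX, Finset.mem_image] at hm ⊢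
    obtain ⟨s, hs, rfl⟩ := hm
    refine ⟨Finsupp.toMultiset n, ?_, Finsupp.toMultiset_toFinsupp n⟩
    apply PureSpecialAux.Y_lower k hs
    rw [← PureSpecialAux.toFinsupp_le_toFinsupp (k := k), Finsupp.toMultiset_toFinsupp]
    exact hnm
  · -- purity
    have key : ∀ m ∈ PureSpecialAux.XX k,
        (∀ p ∈ PureSpecialAux.XX k, m ≤ p → p = m) → monDeg m = 3 := by
      intro m hm hmax
      rw [PureSpecialAux.XX, Finset.mem_image] at hm
      obtain ⟨s, hs, rfl⟩ := hm
      obtain ⟨p, hp, hsp⟩ := PureSpecialAux.exists_S3_le k hs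
      have hpX : Multiset.toFinsupp p ∈ PureSpecialAux.XX k :=
        Finset.mem_image_of_mem _ (PureSpecialAux.S3_subset_Y k hp)
      have heq := hmax _ hpX ((PureSpecialAux.toFinsupp_le_toFinsupp k).2 hsp)
      have hps : p = s := Multiset.toFinsupp.injective heq
      rw [PureSpecialAux.monDeg_toFinsupp, ← hps, PureSpecialAux.card_of_mem_S3 k hp]
    intro m hm n hn hm' hn'
    rw [key m hm hm', key n hn hn']
  · simp
  · exact hdc
  · have := hdc 3
    simp only [List.length_cons, List.length_nil] at *
    rw [show (3 + 1 - 1 : ℕ) = 3 from rfl, this]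
    simp
end
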